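/- arXiv:1204.3186 — 10 statements merged into one kernel-verified Lean document; each statement's English description precedes it below -/
import Mathlib

section
/- The probabilities P_x = f_k(x;λ) satisfy the recurrence x·P_x = Σ_{j=1}^{k} j·λ·P_{x-j} for all integers x ≥ 1, where P_y = 0 for y < 0. -/
open scoped BigOperators
open Real

/-- The pmf of the Poisson distribution of order `k` with parameter `lam`,
indexed by `x : ℤ` (it vanishes for `x < 0`):
`f_k(x;λ) = Σ e^{-kλ} λ^{x₁+⋯+x_k}/(x₁!⋯x_k!)` summed over all `k`-tuples of
nonnegative integers with `x₁ + 2x₂ + ⋯ + k x_k = x`. -/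
noncomputable def poissonOrderK (k : ℕ) (lam : ℝ) (x : ℤ) : ℝ :=
  ∑' t : Fin k → ℕ,
    if ((∑ i : Fin k, ((i : ℕ) + 1) * t i : ℕ) : ℤ) = x then
      Real.exp (-(k * lam)) * lam ^ (∑ i : Fin k, t i) /
        ∏ i : Fin k, (Nat.factorial (t i) : ℝ)
    else 0

/-- The difference `Δ_x = P_x - P_{x-1}`. -/
noncomputable def deltaOrderK (k : ℕ) (lam : ℝ) (x : ℤ) : ℝ :=
  poissonOrderK k lam x - poissonOrderK k lam (x - 1)

/-- Any function supported on tuples of fixed weight is summable. -/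
lemma summable_of_weight {k : ℕ} (x : ℤ) (h : (Fin k → ℕ) → ℝ)
    (h0 : ∀ t, ((∑ i : Fin k, ((i : ℕ) + 1) * t i : ℕ) : ℤ) ≠ x → h t = 0) :
    Summable h := by
  apply summable_of_ne_finset_zero (s := Finset.Icc 0 (fun _ => x.toNat))
  intro t ht
  apply h0
  intro hw
  apply ht
  simp only [Finset.mem_Icc, Pi.le_def]
  refine ⟨fun i => Nat.zero_le _, fun i => ?_⟩
  have h1 : t i ≤ ((i : ℕ) + 1) * t i := Nat.le_mul_of_pos_left _ (Nat.succ_pos _)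
  have h2 : ((i : ℕ) + 1) * t i ≤ ∑ j : Fin k, ((j : ℕ) + 1) * t j :=
    Finset.single_le_sum (f := fun j : Fin k => ((j : ℕ) + 1) * t j)
      (fun _ _ => Nat.zero_le _) (Finset.mem_univ i)
  omega

theorem poissonOrderK_recurrence (k : ℕ) (hk : 1 ≤ k) (lam : ℝ) (hlam : 0 < lam)
    (x : ℤ) (hx : 1 ≤ x) :
    (x : ℝ) * poissonOrderK k lam x
      = ∑ j ∈ Finset.Icc 1 k, (j : ℝ) * lam * poissonOrderK k lam (x - (j : ℤ)) := by
  classical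
  set F : ℤ → (Fin k → ℕ) → ℝ := fun y t =>
    if ((∑ i : Fin k, ((i : ℕ) + 1) * t i : ℕ) : ℤ) = y then
      Real.exp (-(k * lam)) * lam ^ (∑ i : Fin k, t i) /
        ∏ i : Fin k, (Nat.factorial (t i) : ℝ)
    else 0 with hF
  set g : Fin k → (Fin k → ℕ) → ℝ := fun i t =>
    (((i : ℕ) : ℝ) + 1) * (t i : ℝ) * F x t with hg
  have hgsum : ∀ i : Fin k, Summable (g i) := by
    intro i
    apply summable_of_weight x
    intro t ht
    simp only [hg, hF, if_neg ht, mul_zero]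
  -- Step 1 : x * P_x = ∑' t, ∑ i, g i t
  have step1 : (x : ℝ) * poissonOrderK k lam x = ∑' t : Fin k → ℕ, ∑ i : Fin k, g i t := by
    rw [poissonOrderK, ← tsum_mul_left]
    congr 1; funext t
    by_cases h : ((∑ i : Fin k, ((i : ℕ) + 1) * t i : ℕ) : ℤ) = x
    · have hx' : (x : ℝ) = ∑ i : Fin k, ((((i : ℕ) : ℝ) + 1) * (t i : ℝ)) := by
        rw [← h]; push_cast
        exact Finset.sum_congr rfl fun j _ => by ring
      rw [if_pos h, hx', Finset.sum_mul]
      refine Finset.sum_congr rfl fun i _ => ?_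
      simp only [hg, hF, if_pos h]
    · simp only [hg, hF, if_neg h, mul_zero, Finset.sum_const_zero]
  -- Step 2 : swap
  have step2 : (∑' t : Fin k → ℕ, ∑ i : Fin k, g i t) = ∑ i : Fin k, ∑' t, g i t :=
    Summable.tsum_finsetSum (fun i _ => hgsum i)
  -- Step 3 : for each i, ∑' t, g i t = (i+1) * lam * P_{x - (i+1)}
  have step3 : ∀ i : Fin k,
      (∑' t, g i t) = (((i : ℕ) : ℝ) + 1) * lam * poissonOrderK k lam (x - ((i : ℕ) + 1)) := by
    intro i
    set φ : (Fin k → ℕ) → (Fin k → ℕ) := fun s => Function.update s i (s i + 1) with hφ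
    have hinj : Function.Injective φ := by
      intro s s' h
      funext j
      by_cases hji : j = i
      · subst hji
        have := congrFun h j
        simpa [hφ, Function.update] using this
      · have := congrFun h j
        simpa [hφ, Function.update, hji] using this
    have hsupp : Function.support (g i) ⊆ Set.range φ := by
      intro t ht
      have hti : t i ≠ 0 := by
        intro h0
        apply ht
        simp [hg, h0]
      refine ⟨Function.update t i (t i - 1), ?_⟩
      funext j
      by_cases hji : j = i
      · subst hji; simp [hφ, Function.update]; omega
      · simp [hφ, Function.update, hji]
    have key : ∀ s : Fin k → ℕ, g i (φ s)
        = (((i : ℕ) : ℝ) + 1) * lam * F (x - ((i : ℕ) + 1)) s := by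
      intro s
      have hw : (∑ j : Fin k, ((j : ℕ) + 1) * φ s j)
          = (∑ j : Fin k, ((j : ℕ) + 1) * s j) + ((i : ℕ) + 1) := by
        have : ∀ j : Fin k, ((j : ℕ) + 1) * φ s j
            = ((j : ℕ) + 1) * s j + (if j = i then (i : ℕ) + 1 else 0) := by
          intro j
          by_cases hji : j = i
          · subst hji; simp [hφ, Function.update]; ring
          · simp [hφ, Function.update, hji]
        rw [Finset.sum_congr rfl (fun j _ => this j), Finset.sum_add_distrib,
          Finset.sum_ite_eq' Finset.univ i]
        simp
      have hs : (∑ j : Fin k, φ s j) = (∑ j : Fin k, s j) + 1 := by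
        have : ∀ j : Fin k, φ s j = s j + (if j = i then 1 else 0) := by
          intro j
          by_cases hji : j = i
          · subst hji; simp [hφ, Function.update]
          · simp [hφ, Function.update, hji]
        rw [Finset.sum_congr rfl (fun j _ => this j), Finset.sum_add_distrib,
          Finset.sum_ite_eq' Finset.univ i]
        simp
      have hp : (∏ j : Fin k, (Nat.factorial (φ s j) : ℝ))
          = ((s i : ℝ) + 1) * ∏ j : Fin k, (Nat.factorial (s j) : ℝ) := by
        rw [← Finset.mul_prod_erase Finset.univ _ (Finset.mem_univ i),
          ← Finset.mul_prod_erase Finset.univ (fun j => (Nat.factorial (s j) : ℝ))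
            (Finset.mem_univ i)]
        have hφi' : φ s i = s i + 1 := by simp [hφ]
        have h1 : (Nat.factorial (φ s i) : ℝ) = ((s i : ℝ) + 1) * (Nat.factorial (s i) : ℝ) := by
          rw [hφi', Nat.factorial_succ]; push_cast; ring
        have h2 : ∀ j ∈ Finset.univ.erase i, (Nat.factorial (φ s j) : ℝ)
            = (Nat.factorial (s j) : ℝ) := by
          intro j hj
          have hji : j ≠ i := Finset.ne_of_mem_erase hj
          simp [hφ, Function.update, hji]
        rw [h1, Finset.prod_congr rfl h2]; ring
      have hcond : (((∑ j : Fin k, ((j : ℕ) + 1) * φ s j : ℕ) : ℤ) = x)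
          ↔ (((∑ j : Fin k, ((j : ℕ) + 1) * s j : ℕ) : ℤ) = x - ((i : ℕ) + 1)) := by
        rw [hw]; push_cast; omega
      by_cases hc : ((∑ j : Fin k, ((j : ℕ) + 1) * s j : ℕ) : ℤ) = x - ((i : ℕ) + 1)
      · have hc' := hcond.mpr hc
        have hfac : (∏ j : Fin k, (Nat.factorial (s j) : ℝ)) ≠ 0 := by
          apply Finset.prod_ne_zero_iff.mpr
          intro j _
          exact_mod_cast Nat.factorial_ne_zero (s j)
        have hφi : φ s i = s i + 1 := by simp [hφ, Function.update]
        simp only [hg, hF, if_pos hc', if_pos hc, hs, hp, hφi]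
        rw [pow_succ]
        push_cast
        field_simp
      · have hc' : ¬ (((∑ j : Fin k, ((j : ℕ) + 1) * φ s j : ℕ) : ℤ) = x) := fun h => hc (hcond.mp h)
        simp only [hg, hF, if_neg hc', if_neg hc, mul_zero]
    calc (∑' t, g i t) = ∑' s, g i (φ s) := (hinj.tsum_eq hsupp).symm
      _ = ∑' s, (((i : ℕ) : ℝ) + 1) * lam * F (x - ((i : ℕ) + 1)) s := by
          congr 1; funext s; exact key s
      _ = (((i : ℕ) : ℝ) + 1) * lam * poissonOrderK k lam (x - ((i : ℕ) + 1)) := by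
          rw [show (((i : ℕ) : ℝ) + 1) * lam * poissonOrderK k lam (x - ((i : ℕ) + 1))
              = (((i : ℕ) : ℝ) + 1) * lam * ∑' s, F (x - ((i : ℕ) + 1)) s from rfl,
            ← tsum_mul_left]
  -- Step 4 : reindex
  rw [step1, step2, Finset.sum_congr rfl (fun i _ => step3 i)]
  rw [Fin.sum_univ_eq_sum_range
    (fun n => (((n : ℕ) : ℝ) + 1) * lam * poissonOrderK k lam (x - ((n : ℕ) + 1))) k]
  refine Finset.sum_nbij' (fun n => n + 1) (fun j => j - 1) ?_ ?_ ?_ ?_ ?_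
  · intro n hn; simp only [Finset.mem_range] at hn; simp only [Finset.mem_Icc]; omega
  · intro j hj; simp only [Finset.mem_Icc] at hj; simp only [Finset.mem_range]; omega
  · intro n hn; omega
  · intro j hj; simp only [Finset.mem_Icc] at hj; omega
  · intro n hn; push_cast; ring_nf
end

section
/- Any mode m of the Poisson distribution of order k satisfies m ≤ ⌊λk(k+1)/2⌋, i.e., m ≤ λk(k+1)/2. -/
open scoped BigOperators
open Real

/-- The individual term (weight) of the Poisson-of-order-`k` pmf. -/
noncomputable def pW (k : ℕ) (lam : ℝ) (t : Fin k → ℕ) : ℝ :=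
  Real.exp (-(k * lam)) * lam ^ (∑ i : Fin k, t i) / ∏ i : Fin k, (Nat.factorial (t i) : ℝ)

/-- The finite set of `k`-tuples with `x₁ + 2x₂ + ⋯ + k x_k = n`. -/
def pBox (k n : ℕ) : Finset (Fin k → ℕ) :=
  (Fintype.piFinset fun _ => Finset.range (n+1)).filter fun t => ∑ i : Fin k, ((i:ℕ)+1) * t i = n

lemma mem_pBox {k n : ℕ} {t : Fin k → ℕ} :
    t ∈ pBox k n ↔ ∑ i : Fin k, ((i:ℕ)+1) * t i = n := by
  constructor
  · exact fun h => (Finset.mem_filter.mp h).2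
  · intro h
    refine Finset.mem_filter.mpr ⟨?_, h⟩
    rw [Fintype.mem_piFinset]
    intro i
    rw [Finset.mem_range]
    have h1 : ((i:ℕ)+1) * t i ≤ n := by
      rw [← h]
      exact Finset.single_le_sum (f := fun i : Fin k => ((i:ℕ)+1) * t i)
        (fun _ _ => Nat.zero_le _) (Finset.mem_univ i)
    have h2 : t i ≤ ((i:ℕ)+1) * t i := Nat.le_mul_of_pos_left _ (Nat.succ_pos _)
    omega

lemma poissonOrderK_eq_sum (k : ℕ) (lam : ℝ) (n : ℕ) :
    poissonOrderK k lam (n : ℤ) = ∑ t ∈ pBox k n, pW k lam t := by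
  rw [poissonOrderK, tsum_eq_sum (s := pBox k n)]
  · refine Finset.sum_congr rfl fun t ht => ?_
    rw [if_pos (by exact_mod_cast mem_pBox.mp ht)]; rfl
  · intro t ht
    rw [if_neg]
    intro h
    exact ht (mem_pBox.mpr (by exact_mod_cast h))

lemma poissonOrderK_neg (k : ℕ) (lam : ℝ) (x : ℤ) (hx : x < 0) :
    poissonOrderK k lam x = 0 := by
  rw [poissonOrderK]
  convert tsum_zero with t
  rw [if_neg]
  intro h
  have : (0:ℤ) ≤ ((∑ i : Fin k, ((i : ℕ) + 1) * t i : ℕ) : ℤ) := Int.natCast_nonneg _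
  omega

lemma pW_pos {k : ℕ} {lam : ℝ} (hlam : 0 < lam) (t : Fin k → ℕ) : 0 < pW k lam t := by
  unfold pW
  positivity

lemma poissonOrderK_zero_pos {k : ℕ} {lam : ℝ} (hlam : 0 < lam) :
    0 < poissonOrderK k lam (0 : ℤ) := by
  have h : poissonOrderK k lam ((0:ℕ) : ℤ) = ∑ t ∈ pBox k 0, pW k lam t :=
    poissonOrderK_eq_sum k lam 0
  simp only [Nat.cast_zero] at h
  rw [h]
  exact Finset.sum_pos (fun t _ => pW_pos hlam t) ⟨fun _ => 0, mem_pBox.mpr (by simp)⟩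

lemma update_comp {k : ℕ} (g : ℕ → ℝ) (t : Fin k → ℕ) (i : Fin k) (a : ℕ) :
    (fun j => g (Function.update t i a j)) = Function.update (fun j => g (t j)) i (g a) := by
  funext j
  by_cases h : j = i <;> simp [Function.update_apply, h]

lemma update_weight {k : ℕ} (t : Fin k → ℕ) (i : Fin k) (a : ℕ) :
    (fun j : Fin k => ((j:ℕ)+1) * Function.update t i a j)
      = Function.update (fun j : Fin k => ((j:ℕ)+1) * t j) i (((i:ℕ)+1) * a) := by
  funext j
  by_cases h : j = i <;> simp [Function.update_apply, h]

lemma sum_update' {k : ℕ} (t : Fin k → ℕ) (i : Fin k) (a : ℕ) :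
    ∑ j : Fin k, Function.update t i a j = a + ∑ j ∈ Finset.univ \ {i}, t j :=
  Finset.sum_update_of_mem (Finset.mem_univ i) t a

lemma sum_split {k : ℕ} (t : Fin k → ℕ) (i : Fin k) :
    ∑ j : Fin k, t j = t i + ∑ j ∈ Finset.univ \ {i}, t j := by
  rw [Finset.sum_eq_sum_sdiff_singleton_add (Finset.mem_univ i)]
  ring

lemma prod_update' {k : ℕ} (f : Fin k → ℝ) (i : Fin k) (b : ℝ) :
    ∏ j : Fin k, Function.update f i b j = b * ∏ j ∈ Finset.univ \ {i}, f j :=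
  Finset.prod_update_of_mem (Finset.mem_univ i) f b

lemma prod_split {k : ℕ} (f : Fin k → ℝ) (i : Fin k) :
    ∏ j : Fin k, f j = f i * ∏ j ∈ Finset.univ \ {i}, f j := by
  rw [Finset.prod_eq_prod_diff_singleton_mul (Finset.mem_univ i)]
  ring

lemma term_step {k : ℕ} (lam : ℝ) (t : Fin k → ℕ) (i : Fin k) (ht : t i ≠ 0) :
    (t i : ℝ) * pW k lam t = lam * pW k lam (Function.update t i (t i - 1)) := by
  set s := Function.update t i (t i - 1) with hs
  have hsum : ∑ j : Fin k, t j = (∑ j : Fin k, s j) + 1 := by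
    rw [hs, sum_update', sum_split t i]
    omega
  have hprod_t : (∏ j : Fin k, ((t j).factorial : ℝ))
      = (t i : ℝ) * ((t i - 1).factorial : ℝ) * ∏ j ∈ Finset.univ \ {i}, ((t j).factorial : ℝ) := by
    rw [prod_split (fun j => ((t j).factorial : ℝ)) i]
    have hfac : (t i).factorial = t i * (t i - 1).factorial := by
      conv_lhs => rw [show t i = (t i - 1) + 1 by omega]
      rw [Nat.factorial_succ]
      congr 1
      omega
    rw [hfac]
    push_cast
    ring
  have hprod_s : (∏ j : Fin k, ((s j).factorial : ℝ))
      = ((t i - 1).factorial : ℝ) * ∏ j ∈ Finset.univ \ {i}, ((t j).factorial : ℝ) := by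
    have hcomp : (fun j => (((s j).factorial : ℝ))) =
        Function.update (fun j => ((t j).factorial : ℝ)) i (((t i - 1).factorial : ℝ)) :=
      update_comp (fun n => (n.factorial : ℝ)) t i (t i - 1)
    calc ∏ j : Fin k, ((s j).factorial : ℝ)
        = ∏ j : Fin k, Function.update (fun j => ((t j).factorial : ℝ)) i
            (((t i - 1).factorial : ℝ)) j := by rw [← hcomp]
      _ = _ := prod_update' _ i _
  have h1 : ((t i - 1).factorial : ℝ) ≠ 0 := Nat.cast_ne_zero.mpr (Nat.factorial_ne_zero _)
  have h2 : (∏ j ∈ Finset.univ \ {i}, ((t j).factorial : ℝ)) ≠ 0 :=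
    Finset.prod_ne_zero_iff.mpr fun j _ => Nat.cast_ne_zero.mpr (Nat.factorial_ne_zero _)
  have h3 : (t i : ℝ) ≠ 0 := Nat.cast_ne_zero.mpr ht
  rw [pW, pW, hsum, hprod_t, hprod_s, pow_succ]
  field_simp

lemma wsum_update {k : ℕ} (t : Fin k → ℕ) (i : Fin k) (a : ℕ) :
    ∑ j : Fin k, ((j:ℕ)+1) * Function.update t i a j
      = ((i:ℕ)+1) * a + ∑ j ∈ Finset.univ \ {i}, ((j:ℕ)+1) * t j := by
  calc ∑ j : Fin k, ((j:ℕ)+1) * Function.update t i a j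
      = ∑ j : Fin k, Function.update (fun j : Fin k => ((j:ℕ)+1) * t j) i
          (((i:ℕ)+1) * a) j := by rw [← update_weight]
    _ = _ := Finset.sum_update_of_mem (Finset.mem_univ i) _ _

lemma wsum_split {k : ℕ} (t : Fin k → ℕ) (i : Fin k) :
    ∑ j : Fin k, ((j:ℕ)+1) * t j
      = ((i:ℕ)+1) * t i + ∑ j ∈ Finset.univ \ {i}, ((j:ℕ)+1) * t j := by
  rw [Finset.sum_eq_sum_sdiff_singleton_add (Finset.mem_univ i)]
  ring

lemma key (k : ℕ) (lam : ℝ) (n : ℕ) (i : Fin k) :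
    ∑ t ∈ pBox k n, (t i : ℝ) * pW k lam t
      = lam * poissonOrderK k lam ((n : ℤ) - ((i:ℕ)+1)) := by
  by_cases h : (i:ℕ)+1 ≤ n
  · have hcast : ((n:ℤ) - ((i:ℕ)+1)) = ((n - ((i:ℕ)+1) : ℕ) : ℤ) := by push_cast; omega
    rw [hcast, poissonOrderK_eq_sum, Finset.mul_sum]
    rw [← Finset.sum_filter_of_ne (p := fun t => t i ≠ 0)
      (fun t _ hne => fun h0 => hne (by rw [h0]; simp))]
    refine Finset.sum_nbij' (fun t => Function.update t i (t i - 1))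
      (fun s => Function.update s i (s i + 1)) ?_ ?_ ?_ ?_ ?_
    · intro t ht
      obtain ⟨htm, hti⟩ := Finset.mem_filter.mp ht
      have hsum := mem_pBox.mp htm
      refine mem_pBox.mpr ?_
      rw [wsum_update]
      rw [wsum_split t i] at hsum
      have h1 : 1 ≤ t i := Nat.one_le_iff_ne_zero.mpr hti
      have : ((i:ℕ)+1) * t i = ((i:ℕ)+1) * (t i - 1) + ((i:ℕ)+1) := by
        conv_lhs => rw [show t i = (t i - 1) + 1 by omega]
        ring
      omega
    · intro s hs
      have hsum := mem_pBox.mp hs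
      refine Finset.mem_filter.mpr ⟨mem_pBox.mpr ?_, by simp⟩
      rw [wsum_update]
      rw [wsum_split s i] at hsum
      have : ((i:ℕ)+1) * (s i + 1) = ((i:ℕ)+1) * s i + ((i:ℕ)+1) := by ring
      omega
    · intro t ht
      have hti : t i ≠ 0 := (Finset.mem_filter.mp ht).2
      funext j
      by_cases hj : j = i
      · subst hj; simp; omega
      · simp [Function.update_apply, hj]
    · intro s _
      funext j
      by_cases hj : j = i
      · subst hj; simp
      · simp [Function.update_apply, hj]
    · intro t ht
      exact term_step lam t i (Finset.mem_filter.mp ht).2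
  · have hneg : ((n:ℤ) - ((i:ℕ)+1)) < 0 := by omega
    rw [poissonOrderK_neg k lam _ hneg, mul_zero]
    refine Finset.sum_eq_zero fun t ht => ?_
    have hsum := mem_pBox.mp ht
    have hti : t i = 0 := by
      by_contra h0
      have h1 : ((i:ℕ)+1) ≤ ((i:ℕ)+1) * t i := Nat.le_mul_of_pos_right _ (Nat.pos_of_ne_zero h0)
      have h2 : ((i:ℕ)+1) * t i ≤ n := by
        rw [← hsum]
        exact Finset.single_le_sum (f := fun j : Fin k => ((j:ℕ)+1) * t j)
          (fun _ _ => Nat.zero_le _) (Finset.mem_univ i)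
      omega
    rw [hti]
    simp

lemma recurrence (k : ℕ) (lam : ℝ) (n : ℕ) :
    (n : ℝ) * poissonOrderK k lam (n : ℤ)
      = ∑ i : Fin k, (((i:ℕ):ℝ)+1) * (lam * poissonOrderK k lam ((n:ℤ) - ((i:ℕ)+1))) := by
  rw [poissonOrderK_eq_sum, Finset.mul_sum]
  have step1 : ∀ t ∈ pBox k n, (n : ℝ) * pW k lam t
      = ∑ i : Fin k, (((i:ℕ):ℝ)+1) * ((t i : ℝ) * pW k lam t) := by
    intro t ht
    have hsum := mem_pBox.mp ht
    have hn : (n : ℝ) = ∑ i : Fin k, (((i:ℕ):ℝ)+1) * (t i : ℝ) := by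
      rw [← hsum]; push_cast
      exact Finset.sum_congr rfl fun i _ => by ring
    rw [hn, Finset.sum_mul]
    exact Finset.sum_congr rfl fun i _ => by ring
  rw [Finset.sum_congr rfl step1, Finset.sum_comm]
  refine Finset.sum_congr rfl fun i _ => ?_
  rw [← key k lam n i, Finset.mul_sum]

lemma gauss (k : ℕ) : (∑ i : Fin k, (((i:ℕ):ℝ)+1)) = k*(k+1)/2 := by
  induction k with
  | zero => simp
  | succ p ih =>
    rw [Fin.sum_univ_castSucc]
    simp only [Fin.coe_castSucc]
    rw [ih]
    push_cast
    ring

theorem poissonOrderK_mode_upper_bound (k : ℕ) (hk : 1 ≤ k) (lam : ℝ) (hlam : 0 < lam)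
    (m : ℕ) (hm : ∀ x : ℕ, poissonOrderK k lam (x : ℤ) ≤ poissonOrderK k lam (m : ℤ)) :
    (m : ℤ) ≤ ⌊lam * k * (k + 1) / 2⌋ := by
  set Pm := poissonOrderK k lam (m : ℤ) with hPm
  have h0 : 0 < Pm := by
    have := hm 0
    simpa using lt_of_lt_of_le (poissonOrderK_zero_pos hlam) (by simpa using this)
  have hub : ∀ i : Fin k, poissonOrderK k lam ((m:ℤ) - ((i:ℕ)+1)) ≤ Pm := by
    intro i
    by_cases h : (i:ℕ)+1 ≤ m
    · have hc : ((m:ℤ) - ((i:ℕ)+1)) = ((m - ((i:ℕ)+1) : ℕ) : ℤ) := by push_cast; omega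
      rw [hc]; exact hm _
    · rw [poissonOrderK_neg k lam _ (by omega)]
      exact le_of_lt h0
  have hgauss := gauss k
  have hrec := recurrence k lam m
  have hle : (m : ℝ) * Pm ≤ (lam * (k*(k+1)/2)) * Pm := by
    calc (m : ℝ) * Pm
        = ∑ i : Fin k, (((i:ℕ):ℝ)+1) * (lam * poissonOrderK k lam ((m:ℤ) - ((i:ℕ)+1))) := hrec
      _ ≤ ∑ i : Fin k, (((i:ℕ):ℝ)+1) * (lam * Pm) := by
          refine Finset.sum_le_sum fun i _ => ?_
          have hi : (0:ℝ) ≤ ((i:ℕ):ℝ)+1 := by positivity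
          exact mul_le_mul_of_nonneg_left
            (mul_le_mul_of_nonneg_left (hub i) (le_of_lt hlam)) hi
      _ = (∑ i : Fin k, (((i:ℕ):ℝ)+1)) * (lam * Pm) := by rw [Finset.sum_mul]
      _ = (lam * ((k:ℝ)*(k+1)/2)) * Pm := by rw [hgauss]; ring
  have hfinal : (m : ℝ) ≤ lam * k * (k+1) / 2 := by
    have := le_of_mul_le_mul_right (by linarith [hle] : (m:ℝ) * Pm ≤ (lam * (k*(k+1)/2)) * Pm) h0
    linarith [this]
  rw [Int.le_floor]
  push_cast
  exact hfinal
end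

section
/- Any mode m of the Poisson distribution of order k with k ≥ 2 satisfies m ≥ ⌊λk(k+1)/2⌋ − k(k+1)/2 + 1. -/
open scoped BigOperators
open Real

namespace PMode
variable {k : ℕ} {lam : ℝ}

def wt (t : Fin k → ℕ) : ℕ := ∑ i : Fin k, ((i : ℕ) + 1) * t i

noncomputable def w (k : ℕ) (lam : ℝ) (t : Fin k → ℕ) : ℝ :=
  Real.exp (-(k * lam)) * lam ^ (∑ i : Fin k, t i) / ∏ i : Fin k, (Nat.factorial (t i) : ℝ)

lemma w_pos (hlam : 0 < lam) (t : Fin k → ℕ) : 0 < w k lam t := by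
  apply div_pos
  · exact mul_pos (Real.exp_pos _) (pow_pos hlam _)
  · exact Finset.prod_pos fun i _ => by exact_mod_cast (t i).factorial_pos

def Tfin (k : ℕ) (x : ℤ) : Finset (Fin k → ℕ) :=
  Fintype.piFinset (fun _ => Finset.range (x.toNat + 1))

lemma le_wt (t : Fin k → ℕ) (i : Fin k) : t i ≤ wt t :=
  calc t i ≤ ((i : ℕ) + 1) * t i := Nat.le_mul_of_pos_left _ (Nat.succ_pos _)
  _ ≤ wt t := Finset.single_le_sum (f := fun (j : Fin k) => ((j : ℕ) + 1) * t j)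
      (fun j _ => Nat.zero_le _) (Finset.mem_univ i)

lemma mem_Tfin_of_wt {t : Fin k → ℕ} {x : ℤ} (h : ((wt t : ℕ) : ℤ) = x) : t ∈ Tfin k x := by
  rw [Tfin, Fintype.mem_piFinset]
  intro i
  rw [Finset.mem_range]
  have h1 := le_wt t i
  have h2 : x.toNat = wt t := by omega
  omega

lemma P_eq_sum (k : ℕ) (lam : ℝ) (x : ℤ) :
    poissonOrderK k lam x = ∑ t ∈ Tfin k x, if ((wt t : ℕ) : ℤ) = x then w k lam t else 0 := by
  apply tsum_eq_sum
  intro t ht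
  have h2 : ((wt t : ℕ) : ℤ) ≠ x := fun h => ht (mem_Tfin_of_wt h)
  simp only [wt] at h2
  rw [if_neg h2]

def A (k : ℕ) (x : ℤ) : Finset (Fin k → ℕ) :=
  (Tfin k x).filter (fun t => ((wt t : ℕ) : ℤ) = x)

lemma mem_A_iff {x : ℤ} {t : Fin k → ℕ} : t ∈ A k x ↔ ((wt t : ℕ) : ℤ) = x := by
  constructor
  · intro h; exact (Finset.mem_filter.mp h).2
  · intro h; exact Finset.mem_filter.mpr ⟨mem_Tfin_of_wt h, h⟩

lemma P_eq_sumA (k : ℕ) (lam : ℝ) (x : ℤ) :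
    poissonOrderK k lam x = ∑ t ∈ A k x, w k lam t := by
  rw [P_eq_sum, A, Finset.sum_filter]

lemma P_nonneg (hlam : 0 < lam) (x : ℤ) : 0 ≤ poissonOrderK k lam x := by
  rw [P_eq_sumA]
  exact Finset.sum_nonneg fun t _ => (w_pos hlam t).le

lemma P_zero_of_neg (hlam : 0 < lam) {x : ℤ} (hx : x < 0) : poissonOrderK k lam x = 0 := by
  rw [P_eq_sumA]
  apply Finset.sum_eq_zero
  intro t ht
  exfalso
  have := mem_A_iff.mp ht
  omega

lemma P_pos (hk : 0 < k) (hlam : 0 < lam) {x : ℤ} (hx : 0 ≤ x) :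
    0 < poissonOrderK k lam x := by
  rw [P_eq_sumA]
  apply Finset.sum_pos'
  · exact fun t _ => (w_pos hlam t).le
  · refine ⟨fun (i : Fin k) => if (i : ℕ) = 0 then x.toNat else 0, ?_, w_pos hlam _⟩
    rw [mem_A_iff]
    have : wt (fun (i : Fin k) => if (i : ℕ) = 0 then x.toNat else 0) = x.toNat := by
      rw [wt, Finset.sum_eq_single (⟨0, hk⟩ : Fin k)]
      · simp
      · intro b _ hb
        have : (b : ℕ) ≠ 0 := fun h => hb (Fin.ext h)
        simp [this]
      · intro h; exact absurd (Finset.mem_univ _) h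
    rw [this]
    omega

lemma wt_update (t : Fin k → ℕ) (i : Fin k) :
    wt (Function.update t i (t i + 1)) = wt t + ((i : ℕ) + 1) := by
  unfold wt
  rw [show (fun (j : Fin k) => ((j : ℕ) + 1) * (Function.update t i (t i + 1)) j)
      = Function.update (fun (j : Fin k) => ((j : ℕ) + 1) * t j) i (((i:ℕ)+1) * (t i + 1)) from ?_]
  · rw [Finset.sum_update_of_mem (Finset.mem_univ i),
      Finset.sum_eq_sum_sdiff_singleton_add (Finset.mem_univ i)
        (fun (j : Fin k) => ((j : ℕ) + 1) * t j)]
    ring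
  · funext j
    by_cases hji : j = i
    · subst hji; simp
    · rw [Function.update_of_ne hji, Function.update_of_ne hji]

lemma sum_update (t : Fin k → ℕ) (i : Fin k) :
    (∑ j, Function.update t i (t i + 1) j) = (∑ j, t j) + 1 := by
  rw [Finset.sum_update_of_mem (Finset.mem_univ i),
    Finset.sum_eq_sum_sdiff_singleton_add (Finset.mem_univ i) t]
  ring

lemma prod_update (t : Fin k → ℕ) (i : Fin k) :
    (∏ j, ((Function.update t i (t i + 1) j).factorial : ℝ))
      = ((t i : ℝ) + 1) * ∏ j, ((t j).factorial : ℝ) := by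
  rw [show (fun (j : Fin k) => (((Function.update t i (t i + 1)) j).factorial : ℝ))
      = Function.update (fun (j : Fin k) => ((t j).factorial : ℝ)) i (((t i + 1).factorial : ℝ))
      from ?_]
  · rw [Finset.prod_update_of_mem (Finset.mem_univ i),
      Finset.prod_eq_prod_diff_singleton_mul (Finset.mem_univ i)
        (fun (j : Fin k) => ((t j).factorial : ℝ)), Nat.factorial_succ]
    push_cast
    ring
  · funext j
    by_cases hji : j = i
    · subst hji; simp
    · rw [Function.update_of_ne hji, Function.update_of_ne hji]

lemma w_update (hlam : 0 < lam) (t : Fin k → ℕ) (i : Fin k) :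
    ((t i : ℝ) + 1) * w k lam (Function.update t i (t i + 1)) = lam * w k lam t := by
  unfold w
  rw [sum_update, prod_update, pow_succ]
  have h1 : ((t i : ℝ) + 1) ≠ 0 := by positivity
  have h2 : (∏ j, ((t j).factorial : ℝ)) ≠ 0 := by
    apply ne_of_gt
    exact Finset.prod_pos fun j _ => by exact_mod_cast (t j).factorial_pos
  field_simp

lemma key (hlam : 0 < lam) (i : Fin k) (x : ℤ) :
    lam * poissonOrderK k lam (x - ((i : ℕ) + 1)) = ∑ s ∈ A k x, (s i : ℝ) * w k lam s := by
  rw [P_eq_sumA, Finset.mul_sum]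
  have hres : (∑ s ∈ A k x, (s i : ℝ) * w k lam s)
      = ∑ s ∈ (A k x).filter (fun s => s i ≠ 0), (s i : ℝ) * w k lam s := by
    refine (Finset.sum_subset (Finset.filter_subset _ _) ?_).symm
    intro s hs hns
    have : s i = 0 := by
      by_contra h
      exact hns (Finset.mem_filter.mpr ⟨hs, h⟩)
    rw [this]
    simp
  rw [hres]
  refine Finset.sum_nbij' (i := fun t => Function.update t i (t i + 1))
    (j := fun s => Function.update s i (s i - 1)) ?_ ?_ ?_ ?_ ?_
  · intro t ht
    rw [mem_A_iff] at ht
    refine Finset.mem_filter.mpr ⟨mem_A_iff.mpr ?_, ?_⟩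
    · rw [wt_update]
      push_cast
      omega
    · rw [Function.update_self]
      omega
  · intro s hs
    obtain ⟨hs1, hs2⟩ := Finset.mem_filter.mp hs
    rw [mem_A_iff] at hs1
    have hback : Function.update (Function.update s i (s i - 1)) i
        ((Function.update s i (s i - 1)) i + 1) = s := by
      rw [Function.update_self, Function.update_idem]
      have : s i - 1 + 1 = s i := by omega
      rw [this, Function.update_eq_self]
    rw [mem_A_iff]
    have hw := wt_update (Function.update s i (s i - 1)) i
    rw [hback] at hw
    push_cast
    omega
  · intro t _
    rw [Function.update_self, Function.update_idem]
    have : t i + 1 - 1 = t i := by omega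
    rw [this, Function.update_eq_self]
  · intro s hs
    obtain ⟨_, hs2⟩ := Finset.mem_filter.mp hs
    rw [Function.update_self, Function.update_idem]
    have : s i - 1 + 1 = s i := by omega
    rw [this, Function.update_eq_self]
  · intro t _
    rw [Function.update_self]
    rw [← w_update hlam t i]
    push_cast
    ring

lemma F2 (hlam : 0 < lam) (x : ℤ) :
    (x : ℝ) * poissonOrderK k lam x
      = lam * ∑ j ∈ Finset.range k, ((j : ℝ) + 1) * poissonOrderK k lam (x - ((j : ℕ) + 1)) := by
  rw [Finset.mul_sum]
  rw [← Fin.sum_univ_eq_sum_range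
    (fun j => lam * (((j : ℝ) + 1) * poissonOrderK k lam (x - ((j : ℕ) + 1))))]
  have hterm : ∀ i : Fin k,
      lam * ((((i : ℕ) : ℝ) + 1) * poissonOrderK k lam (x - ((i : ℕ) + 1)))
        = ∑ s ∈ A k x, (((i : ℕ) : ℝ) + 1) * ((s i : ℝ) * w k lam s) := by
    intro i
    rw [← Finset.mul_sum, ← key hlam i x]
    ring
  rw [Finset.sum_congr rfl (fun i _ => hterm i), Finset.sum_comm]
  rw [P_eq_sumA, Finset.mul_sum]
  apply Finset.sum_congr rfl
  intro s hs
  have hwt : ((wt s : ℕ) : ℝ) = (x : ℝ) := by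
    have := mem_A_iff.mp hs
    exact_mod_cast congrArg (fun z : ℤ => (z : ℝ)) this
  have hfold : (∑ i : Fin k, (((i : ℕ) : ℝ) + 1) * ((s i : ℝ) * w k lam s))
      = (∑ i : Fin k, (((i : ℕ) : ℝ) + 1) * (s i : ℝ)) * w k lam s := by
    rw [Finset.sum_mul]
    exact Finset.sum_congr rfl fun i _ => by ring
  have hsum : (∑ i : Fin k, (((i : ℕ) : ℝ) + 1) * (s i : ℝ)) = ((wt s : ℕ) : ℝ) := by
    rw [wt]
    push_cast
    rfl
  rw [hfold, hsum, hwt]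

noncomputable def Dl (k : ℕ) (lam : ℝ) (x : ℤ) : ℝ :=
  poissonOrderK k lam x - poissonOrderK k lam (x - 1)

def Kn (k : ℕ) : ℕ := ∑ j ∈ Finset.range k, (j + 1)

def c (k i : ℕ) : ℕ := ∑ j ∈ Finset.Ico i k, (j + 1)

lemma c_zero : c k 0 = Kn k := by
  rw [c, Kn, Finset.range_eq_Ico]

lemma c_le (i : ℕ) : c k i ≤ Kn k := by
  rw [c, Kn, Finset.range_eq_Ico]
  exact Finset.sum_le_sum_of_subset (Finset.Ico_subset_Ico (Nat.zero_le _) le_rfl)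

lemma c_succ {i : ℕ} (hi : i < k) : c k i = (i + 1) + c k (i + 1) := by
  rw [c, c, Finset.sum_eq_sum_Ico_succ_bot hi]

lemma c_last (hk : 0 < k) : c k (k - 1) = k := by
  rw [c]
  have : Finset.Ico (k-1) k = {k-1} := by
    ext j
    simp only [Finset.mem_Ico, Finset.mem_singleton]
    omega
  rw [this, Finset.sum_singleton]
  omega

lemma c_ineq {i : ℕ} (hi : i < k) : Kn k * c k (i + 1) + c k i ≤ Kn k * c k i := by
  have h1 := c_succ (k := k) hi
  have h2 := c_le (k := k) i
  nlinarith [Nat.zero_le (c k (i+1))]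

lemma D_neg (hlam : 0 < lam) {x : ℤ} (hx : x < 0) : Dl k lam x = 0 := by
  rw [Dl, P_zero_of_neg hlam hx, P_zero_of_neg hlam (by omega)]
  ring

lemma D_zero (hlam : 0 < lam) : Dl k lam 0 = poissonOrderK k lam 0 := by
  rw [Dl, P_zero_of_neg hlam (by omega : (0:ℤ) - 1 < 0)]
  ring

lemma TEL (k : ℕ) (lam : ℝ) (x : ℤ) (n : ℕ) :
    poissonOrderK k lam x
      = (∑ j ∈ Finset.range n, Dl k lam (x - j)) + poissonOrderK k lam (x - n) := by
  induction n with
  | zero => simp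
  | succ n ih =>
    rw [Finset.sum_range_succ, ih, Dl]
    have h1 : (x - (n:ℤ)) - 1 = x - ((n:ℕ)+1:ℕ) := by push_cast; ring
    rw [h1]
    ring

lemma Drec (hlam : 0 < lam) (x : ℤ) :
    (x : ℝ) * Dl k lam x
      = lam * (∑ j ∈ Finset.range k, ((j:ℝ)+1) * Dl k lam (x - ((j:ℤ)+1)))
        - poissonOrderK k lam (x - 1) := by
  have h1 := F2 (k := k) hlam x
  have h2 := F2 (k := k) hlam (x - 1)
  have hx1 : ((x - 1 : ℤ) : ℝ) = (x:ℝ) - 1 := by push_cast; ring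
  rw [hx1] at h2
  have hsum : (∑ j ∈ Finset.range k, ((j:ℝ)+1) * Dl k lam (x - ((j:ℤ)+1)))
      = (∑ j ∈ Finset.range k, ((j:ℝ)+1) * poissonOrderK k lam (x - ((j:ℤ)+1)))
        - (∑ j ∈ Finset.range k, ((j:ℝ)+1) * poissonOrderK k lam ((x-1) - ((j:ℤ)+1))) := by
    rw [← Finset.sum_sub_distrib]
    apply Finset.sum_congr rfl
    intro j _
    rw [Dl]
    have i2 : x - ((j:ℤ)+1) - 1 = (x-1) - ((j:ℤ)+1) := by ring
    rw [i2]
    ring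
  rw [Dl, hsum]
  linear_combination h1 - h2

lemma interchange (g : ℕ → ℕ → ℝ) :
    (∑ i ∈ Finset.range k, ∑ j ∈ Finset.Ico i k, g i j)
      = ∑ j ∈ Finset.range k, ∑ i ∈ Finset.range (j + 1), g i j := by
  have h1 : ∀ i ∈ Finset.range k, (∑ j ∈ Finset.Ico i k, g i j)
      = ∑ j ∈ Finset.range k, if i ≤ j then g i j else 0 := by
    intro i _
    rw [← Finset.sum_filter]
    congr 1
    ext j
    simp only [Finset.mem_Ico, Finset.mem_filter, Finset.mem_range]
    omega
  have h2 : ∀ j ∈ Finset.range k, (∑ i ∈ Finset.range (j+1), g i j)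
      = ∑ i ∈ Finset.range k, if i ≤ j then g i j else 0 := by
    intro j hj
    simp only [Finset.mem_range] at hj
    rw [← Finset.sum_filter]
    congr 1
    ext i
    simp only [Finset.mem_filter, Finset.mem_range]
    omega
  rw [Finset.sum_congr rfl h1, Finset.sum_congr rfl h2, Finset.sum_comm]

lemma STAR (hlam : 0 < lam) (x : ℤ) :
    (lam * (Kn k) - x) * poissonOrderK k lam x
      = lam * ∑ i ∈ Finset.range k, (c k i : ℝ) * Dl k lam (x - i) := by
  have htel : ∀ j ∈ Finset.range k,
      poissonOrderK k lam x - poissonOrderK k lam (x - ((j:ℤ)+1))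
        = ∑ i ∈ Finset.range (j+1), Dl k lam (x - i) := by
    intro j _
    have h := TEL k lam x (j+1)
    push_cast at h
    linarith [h]
  have hc : ∀ i ∈ Finset.range k, ((c k i : ℕ) : ℝ) * Dl k lam (x - i)
      = ∑ j ∈ Finset.Ico i k, ((j:ℝ)+1) * Dl k lam (x - i) := by
    intro i _
    rw [c, ← Finset.sum_mul]
    push_cast
    ring
  rw [Finset.sum_congr rfl hc, interchange (fun i j => ((j:ℝ)+1) * Dl k lam (x - i))]
  have hswap : ∀ j ∈ Finset.range k,
      (∑ i ∈ Finset.range (j+1), ((j:ℝ)+1) * Dl k lam (x - i))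
        = ((j:ℝ)+1) * poissonOrderK k lam x
          - ((j:ℝ)+1) * poissonOrderK k lam (x - ((j:ℤ)+1)) := by
    intro j hj
    rw [← Finset.mul_sum, ← htel j hj]
    ring
  rw [Finset.sum_congr rfl hswap, Finset.sum_sub_distrib, ← Finset.sum_mul]
  have hKn : (∑ j ∈ Finset.range k, ((j:ℝ)+1)) = ((Kn k : ℕ) : ℝ) := by
    rw [Kn]
    push_cast
    ring
  have hF2 := F2 (k := k) hlam x
  rw [hKn]
  linear_combination -hF2

lemma D_one (hk : 0 < k) (hlam : 0 < lam) :
    Dl k lam 1 = (lam - 1) * poissonOrderK k lam 0 := by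
  have h := Drec (k := k) hlam 1
  have hsum : (∑ j ∈ Finset.range k, ((j:ℝ)+1) * Dl k lam (1 - ((j:ℤ)+1)))
      = Dl k lam 0 := by
    rw [Finset.sum_eq_single 0]
    · norm_num
    · intro j _ hj0
      have hneg : (1 - ((j:ℤ)+1)) < 0 := by omega
      rw [D_neg hlam hneg]
      ring
    · intro h0
      exact absurd (Finset.mem_range.mpr hk) h0
  rw [hsum, D_zero hlam] at h
  have h0 : (1:ℤ) - 1 = 0 := by norm_num
  rw [h0] at h
  push_cast at h
  linarith [h]

lemma Kn_pos (hk : 0 < k) : 0 < Kn k := by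
  rw [Kn]
  have : 1 ∈ Finset.range k → True := fun _ => trivial
  calc 0 < 0 + 1 := by omega
  _ ≤ ∑ j ∈ Finset.range k, (j+1) :=
      Finset.single_le_sum (f := fun j => j + 1) (fun i _ => by omega) (Finset.mem_range.mpr hk)

lemma mono (hk : 2 ≤ k) (hlam : 0 < lam) (hlam1 : 1 ≤ lam) :
    ∀ x : ℕ, 1 ≤ x → ((x : ℝ) ≤ (k:ℝ) ∨ (x:ℝ) ≤ lam * (Kn k) - (Kn k) + 1) →
      0 ≤ Dl k lam x ∧ (2 ≤ x → 0 < Dl k lam x) := by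
  intro x
  induction x using Nat.strong_induction_on with
  | _ x IH =>
  intro hx1 hcond
  have hk0 : 0 < k := by omega
  have hKn : 0 < Kn k := Kn_pos hk0
  have hKnR : (0:ℝ) < (Kn k : ℝ) := by exact_mod_cast hKn
  -- helper: D ≥ 0 at ℤ indices below x
  have hDnn : ∀ y : ℤ, y < x →
      ((y:ℝ) ≤ (k:ℝ) ∨ (y:ℝ) ≤ lam * (Kn k) - (Kn k) + 1) → 0 ≤ Dl k lam y := by
    intro y hyx hyc
    rcases lt_trichotomy y 0 with hy | hy | hy
    · rw [D_neg hlam hy]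
    · rw [hy, D_zero hlam]
      exact P_nonneg hlam 0
    · have hyn : y = (y.toNat : ℤ) := (Int.toNat_of_nonneg (by omega)).symm
      have h1 : 1 ≤ y.toNat := by omega
      have h2 : y.toNat < x := by omega
      have hcast : ((y.toNat : ℕ) : ℝ) = (y : ℝ) := by
        have h3 : ((y.toNat : ℕ) : ℤ) = y := Int.toNat_of_nonneg (by omega)
        exact_mod_cast congrArg (fun z : ℤ => (z : ℝ)) h3
      have hyc' : ((y.toNat:ℕ) : ℝ) ≤ (k:ℝ) ∨ ((y.toNat:ℕ):ℝ) ≤ lam * (Kn k) - (Kn k) + 1 := by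
        rw [hcast]; exact hyc
      have := (IH y.toNat h2 h1 hyc').1
      rw [hyn]
      exact this
  -- helper: strict positivity of D at x-k style points
  by_cases hxk : x ≤ k
  · -- Case A : x ≤ k
    rcases eq_or_lt_of_le hx1 with h1 | h2
    · -- x = 1
      constructor
      · rw [← h1]
        norm_num
        rw [D_one hk0 hlam]
        have := P_nonneg (k := k) hlam 0
        nlinarith
      · intro habs; omega
    · -- 2 ≤ x ≤ k
      have hx2 : 2 ≤ x := h2
      have hrec := Drec (k := k) hlam (x : ℤ)
      have htel := TEL k lam ((x:ℤ)-1) x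
      have hPneg : poissonOrderK k lam ((x:ℤ) - 1 - (x:ℕ)) = 0 :=
        P_zero_of_neg hlam (by omega)
      rw [hPneg, add_zero] at htel
      -- convert the k-sum to an x-sum
      have hzero : ∀ j ∈ Finset.range k, j ∉ Finset.range x →
          ((j:ℝ)+1) * Dl k lam ((x:ℤ) - ((j:ℤ)+1)) = 0 := by
        intro j _ hj
        rw [Finset.mem_range, not_lt] at hj
        rw [D_neg hlam (by omega)]
        ring
      have hsub : (∑ j ∈ Finset.range k, ((j:ℝ)+1) * Dl k lam ((x:ℤ) - ((j:ℤ)+1)))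
          = ∑ j ∈ Finset.range x, ((j:ℝ)+1) * Dl k lam ((x:ℤ) - ((j:ℤ)+1)) :=
        (Finset.sum_subset (Finset.range_subset_range.mpr hxk) hzero).symm
      rw [hsub] at hrec
      -- rewrite telescope sum indices
      have htel' : poissonOrderK k lam ((x:ℤ)-1)
          = ∑ j ∈ Finset.range x, Dl k lam ((x:ℤ) - ((j:ℤ)+1)) := by
        rw [htel]
        apply Finset.sum_congr rfl
        intro j _
        congr 1
        omega
      rw [htel'] at hrec
      rw [Finset.mul_sum, ← Finset.sum_sub_distrib] at hrec
      have hterm : ∀ j ∈ Finset.range x,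
          lam * (((j:ℝ)+1) * Dl k lam ((x:ℤ) - ((j:ℤ)+1))) - Dl k lam ((x:ℤ) - ((j:ℤ)+1))
            = (lam * ((j:ℝ)+1) - 1) * Dl k lam ((x:ℤ) - ((j:ℤ)+1)) := by
        intro j _
        ring
      rw [Finset.sum_congr rfl hterm] at hrec
      -- positivity of the sum
      have hnn : ∀ j ∈ Finset.range x,
          0 ≤ (lam * ((j:ℝ)+1) - 1) * Dl k lam ((x:ℤ) - ((j:ℤ)+1)) := by
        intro j hj
        rw [Finset.mem_range] at hj
        apply mul_nonneg
        · nlinarith [Nat.cast_nonneg (α := ℝ) j]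
        · apply hDnn
          · omega
          · left
            push_cast
            have ha : (x:ℝ) ≤ (k:ℝ) := by exact_mod_cast hxk
            have hb : (0:ℝ) ≤ (j:ℝ) := Nat.cast_nonneg j
            linarith
      have hlast : ((x:ℕ) - 1 : ℕ) ∈ Finset.range x := Finset.mem_range.mpr (by omega)
      have hDl0 : ((x:ℤ) - (((x - 1 : ℕ):ℤ)+1)) = 0 := by omega
      have hsingle := Finset.single_le_sum (f := fun (j : ℕ) =>
          (lam * ((j:ℝ)+1) - 1) * Dl k lam ((x:ℤ) - ((j:ℤ)+1))) hnn hlast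
      rw [hDl0, D_zero hlam] at hsingle
      have hP0 : 0 < poissonOrderK k lam 0 := P_pos hk0 hlam le_rfl
      have hcoef : 0 < lam * (((x-1:ℕ):ℝ)+1) - 1 := by
        have : ((x-1:ℕ):ℝ) = (x:ℝ) - 1 := by
          push_cast [Nat.cast_sub (by omega : 1 ≤ x)]
          ring
        rw [this]
        have hxR2 : (2:ℝ) ≤ (x:ℝ) := by exact_mod_cast hx2
        nlinarith [mul_le_mul_of_nonneg_right hlam1 (by linarith : (0:ℝ) ≤ (x:ℝ))]
      have hsumpos : 0 < ∑ j ∈ Finset.range x,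
          (lam * ((j:ℝ)+1) - 1) * Dl k lam ((x:ℤ) - ((j:ℤ)+1)) := by
        calc (0:ℝ) < (lam * (((x-1:ℕ):ℝ)+1) - 1) * poissonOrderK k lam 0 :=
              mul_pos hcoef hP0
        _ ≤ _ := hsingle
      have hxR : (0:ℝ) < (x:ℝ) := by positivity
      have hxx : ((x:ℤ):ℝ) = (x:ℝ) := by push_cast; ring
      rw [hxx] at hrec
      have hDpos : 0 < Dl k lam (x:ℤ) := by nlinarith [hrec, hsumpos, hxR]
      exact ⟨le_of_lt hDpos, fun _ => hDpos⟩
  · -- Case B : k < x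
    push_neg at hxk
    have hcondR : (x:ℝ) ≤ lam * (Kn k) - (Kn k) + 1 := by
      rcases hcond with h | h
      · exfalso
        have : (x:ℝ) > (k:ℝ) := by exact_mod_cast hxk
        linarith
      · exact h
    have hkKn : k ≤ Kn k := by
      calc k = ∑ _j ∈ Finset.range k, 1 := by simp
      _ ≤ ∑ j ∈ Finset.range k, (j+1) := Finset.sum_le_sum (fun i _ => by omega)
    have hKn2 : (2:ℝ) ≤ (Kn k : ℝ) := by
      have : 2 ≤ Kn k := le_trans hk hkKn
      exact_mod_cast this
    have hstar := STAR (k := k) hlam (x : ℤ)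
    have hstar1 := STAR (k := k) hlam ((x : ℤ) - 1)
    -- split off the i = 0 term and reindex
    have hsplit0 : (∑ i ∈ Finset.range k, (c k i : ℝ) * Dl k lam ((x:ℤ) - i))
        = (Kn k : ℝ) * Dl k lam (x:ℤ)
          + ∑ i ∈ Finset.range (k-1), (c k (i+1) : ℝ) * Dl k lam ((x:ℤ) - 1 - i) := by
      have e1 : (∑ i ∈ Finset.range k, (c k i : ℝ) * Dl k lam ((x:ℤ) - i))
          = ∑ i ∈ Finset.Ico 0 k, (c k i : ℝ) * Dl k lam ((x:ℤ) - i) := by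
        rw [Finset.range_eq_Ico]
      rw [e1, Finset.sum_eq_sum_Ico_succ_bot hk0, Finset.sum_Ico_eq_sum_range]
      congr 1
      · rw [c_zero]
        norm_num
      · apply Finset.sum_congr rfl
        intro i _
        have h1 : 0 + 1 + i = i + 1 := by omega
        rw [h1]
        have h2 : (x:ℤ) - ((i+1 : ℕ):ℤ) = (x:ℤ) - 1 - (i:ℤ) := by push_cast; ring
        rw [h2]
    -- split off the last term of the (x-1)-sum
    have hsplitlast : (∑ i ∈ Finset.range k, (c k i : ℝ) * Dl k lam ((x:ℤ) - 1 - i))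
        = (∑ i ∈ Finset.range (k-1), (c k i : ℝ) * Dl k lam ((x:ℤ) - 1 - i))
          + (k : ℝ) * Dl k lam ((x:ℤ) - k) := by
      have hk1 : k - 1 + 1 = k := by omega
      have hsr := Finset.sum_range_succ
        (fun i => (c k i : ℝ) * Dl k lam ((x:ℤ) - 1 - i)) (k-1)
      rw [hk1] at hsr
      rw [hsr]
      have hcl : ((c k (k-1) : ℕ) : ℝ) = (k : ℝ) := by exact_mod_cast c_last hk0
      have harg : (x:ℤ) - 1 - ((k-1 : ℕ):ℤ) = (x:ℤ) - (k:ℤ) := by omega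
      rw [harg, hcl]
    -- per-term comparison
    have hterm2 : ∀ i ∈ Finset.range (k-1),
        (Kn k : ℝ) * ((c k (i+1) : ℝ) * Dl k lam ((x:ℤ) - 1 - i))
          ≤ ((Kn k : ℝ) - 1) * ((c k i : ℝ) * Dl k lam ((x:ℤ) - 1 - i)) := by
      intro i hi
      rw [Finset.mem_range] at hi
      have hci := c_ineq (k := k) (i := i) (by omega)
      have hD : 0 ≤ Dl k lam ((x:ℤ) - 1 - i) := by
        apply hDnn _ (by omega)
        right
        push_cast
        have hb : (0:ℝ) ≤ (i:ℝ) := Nat.cast_nonneg i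
        linarith
      have hcast : (Kn k : ℝ) * (c k (i+1) : ℝ) + (c k i : ℝ) ≤ (Kn k : ℝ) * (c k i:ℝ) := by
        exact_mod_cast hci
      have hle : (Kn k : ℝ) * (c k (i+1) : ℝ) ≤ ((Kn k : ℝ) - 1) * (c k i : ℝ) := by
        have hc0 : (0:ℝ) ≤ (c k i : ℝ) := Nat.cast_nonneg _
        nlinarith
      have := mul_le_mul_of_nonneg_right hle hD
      nlinarith [this]
    have hsum2 : (Kn k:ℝ) * (∑ i ∈ Finset.range (k-1), (c k (i+1) : ℝ) * Dl k lam ((x:ℤ)-1-i))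
        ≤ ((Kn k:ℝ) - 1) * (∑ i ∈ Finset.range (k-1), (c k i : ℝ) * Dl k lam ((x:ℤ)-1-i)) := by
      rw [Finset.mul_sum, Finset.mul_sum]
      exact Finset.sum_le_sum hterm2
    -- strict positivity of D at x - k
    have hDxk : 0 < Dl k lam ((x:ℤ) - k) := by
      rcases Nat.lt_or_ge (k+1) x with h2 | h1
      · -- 2 ≤ x - k
        have hcast : ((x - k : ℕ) : ℤ) = (x:ℤ) - k := by omega
        rw [← hcast]
        refine (IH (x-k) (by omega) (by omega) ?_).2 (by omega)
        right
        have : ((x - k : ℕ) : ℝ) ≤ (x : ℝ) := by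
          have : (x - k : ℕ) ≤ x := by omega
          exact_mod_cast this
        linarith
      · -- x = k + 1
        have hx : (x:ℤ) - k = 1 := by omega
        rw [hx, D_one hk0 hlam]
        have hP0 : 0 < poissonOrderK k lam 0 := P_pos hk0 hlam le_rfl
        have hlam2 : 1 < lam := by
          have hxx : (x:ℝ) = (k:ℝ) + 1 := by
            have : x = k + 1 := by omega
            rw [this]; push_cast; ring
          rw [hxx] at hcondR
          by_contra hc
          push_neg at hc
          have h4 : lam * (Kn k : ℝ) ≤ 1 * (Kn k : ℝ) :=
            mul_le_mul_of_nonneg_right hc (le_of_lt hKnR)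
          have h5 : (2:ℝ) ≤ (k:ℝ) := by exact_mod_cast hk
          linarith
        exact mul_pos (by linarith : (0:ℝ) < lam - 1) hP0
    -- assemble
    have hPx : poissonOrderK k lam (x:ℤ)
        = poissonOrderK k lam ((x:ℤ)-1) + Dl k lam (x:ℤ) := by
      rw [Dl]; ring
    have hxc : ((((x:ℕ):ℤ)) : ℝ) = (x:ℝ) := by push_cast; ring
    have hxc1 : ((((x:ℕ):ℤ) - 1 : ℤ) : ℝ) = (x:ℝ) - 1 := by push_cast; ring
    rw [hsplit0, hPx, hxc] at hstar
    rw [hsplitlast, hxc1] at hstar1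
    set DX := Dl k lam (x:ℤ) with hDX
    set P1 := poissonOrderK k lam ((x:ℤ)-1) with hP1
    set DK := Dl k lam ((x:ℤ) - k) with hDK
    set S1 := ∑ i ∈ Finset.range (k-1), (c k (i+1) : ℝ) * Dl k lam ((x:ℤ)-1-i) with hS1
    set S0 := ∑ i ∈ Finset.range (k-1), (c k i : ℝ) * Dl k lam ((x:ℤ)-1-i) with hS0
    -- hstar : (lam*Kn - x)*(P1 + DX) = lam*(Kn*DX + S1)
    -- hstar1 : (lam*Kn - (x-1))*P1 = lam*(S0 + k*DK)
    have hgoal1 : (Kn k:ℝ) * (x:ℝ) * DX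
        - ((lam * (Kn k:ℝ) - (x:ℝ) - (Kn k:ℝ) + 1) * P1
            + lam * (k:ℝ) * ((Kn k:ℝ) - 1) * DK)
        = lam * (((Kn k:ℝ) - 1) * S0 - (Kn k:ℝ) * S1) := by
      linear_combination (-(Kn k:ℝ)) * hstar + ((Kn k:ℝ) - 1) * hstar1
    have hE4 : 0 ≤ lam * (((Kn k:ℝ) - 1) * S0 - (Kn k:ℝ) * S1) := by
      apply mul_nonneg (le_of_lt hlam)
      linarith [hsum2]
    have ht1 : 0 ≤ (lam * (Kn k:ℝ) - (x:ℝ) - (Kn k:ℝ) + 1) * P1 := by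
      apply mul_nonneg
      · linarith [hcondR]
      · exact P_nonneg hlam _
    have ht2 : 0 < lam * (k:ℝ) * ((Kn k:ℝ) - 1) * DK := by
      apply mul_pos
      apply mul_pos
      apply mul_pos hlam
      · exact_mod_cast Nat.cast_pos.mpr hk0
      · linarith
      · exact hDxk
    have hxRpos : (0:ℝ) < (x:ℝ) := by
      have : 0 < x := by omega
      exact_mod_cast this
    have hfin : 0 < (Kn k:ℝ) * (x:ℝ) * DX := by linarith
    have hDpos : 0 < DX := by
      by_contra hc
      push_neg at hc
      have : (Kn k:ℝ) * (x:ℝ) * DX ≤ 0 :=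
        mul_nonpos_of_nonneg_of_nonpos (by positivity) hc
      linarith
    exact ⟨le_of_lt hDpos, fun _ => hDpos⟩

lemma Kn_eq (k : ℕ) : 2 * Kn k = k * (k + 1) := by
  induction k with
  | zero => rfl
  | succ n ih =>
    have : Kn (n+1) = Kn n + (n+1) := by
      rw [Kn, Kn, Finset.sum_range_succ]
    rw [this, Nat.mul_add, ih]
    ring

end PMode

theorem poissonOrderK_mode_lower_bound (k : ℕ) (hk : 2 ≤ k) (lam : ℝ) (hlam : 0 < lam)
    (m : ℕ) (hm : ∀ x : ℕ, poissonOrderK k lam (x : ℤ) ≤ poissonOrderK k lam (m : ℤ)) :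
    (m : ℤ) ≥ ⌊lam * k * (k + 1) / 2⌋ - k * (k + 1) / 2 + 1 := by
  have hk0 : 0 < k := by omega
  have hKnZ : ((PMode.Kn k : ℕ) : ℤ) = (k : ℤ) * ((k : ℤ) + 1) / 2 := by
    have h1 : 2 * PMode.Kn k = k * (k + 1) := PMode.Kn_eq k
    have h2 : (2 : ℤ) * ((PMode.Kn k : ℕ) : ℤ) = (k : ℤ) * ((k : ℤ) + 1) := by
      exact_mod_cast congrArg (fun n : ℕ => (n : ℤ)) h1
    omega
  have hKnR : ((PMode.Kn k : ℕ) : ℝ) = (k : ℝ) * ((k : ℝ) + 1) / 2 := by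
    have h1 : 2 * PMode.Kn k = k * (k + 1) := PMode.Kn_eq k
    have h2 : (2 : ℝ) * ((PMode.Kn k : ℕ) : ℝ) = (k : ℝ) * ((k : ℝ) + 1) := by
      exact_mod_cast congrArg (fun n : ℕ => (n : ℝ)) h1
    linarith
  have hfloor : ⌊lam * k * (k + 1) / 2⌋ = ⌊lam * ((PMode.Kn k : ℕ) : ℝ)⌋ := by
    congr 1
    rw [hKnR]
    ring
  rw [hfloor, ← hKnZ]
  set Kn := PMode.Kn k with hKndef
  have hKnpos : 0 < Kn := PMode.Kn_pos hk0
  have hKnRpos : (0:ℝ) < (Kn : ℝ) := by exact_mod_cast hKnpos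
  by_contra hcon
  push_neg at hcon
  -- hcon : m < ⌊lam * Kn⌋ - Kn + 1, i.e. m + Kn ≤ ⌊lam * Kn⌋
  have hmK : (m : ℤ) + (Kn : ℤ) ≤ ⌊lam * (Kn : ℝ)⌋ := by omega
  have hfl : ((⌊lam * (Kn : ℝ)⌋ : ℤ) : ℝ) ≤ lam * (Kn : ℝ) := Int.floor_le _
  have hmKR : (m : ℝ) + (Kn : ℝ) ≤ lam * (Kn : ℝ) := by
    have : (((m : ℤ) + (Kn : ℤ) : ℤ) : ℝ) ≤ ((⌊lam * (Kn : ℝ)⌋ : ℤ) : ℝ) := by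
      exact_mod_cast hmK
    push_cast at this
    linarith
  have hlam1 : 1 ≤ lam := by
    by_contra hc
    push_neg at hc
    have h4 : lam * (Kn : ℝ) < 1 * (Kn : ℝ) := mul_lt_mul_of_pos_right hc hKnRpos
    have h5 : (0:ℝ) ≤ (m : ℝ) := Nat.cast_nonneg m
    linarith
  rcases Nat.eq_zero_or_pos m with hm0 | hm1
  · -- m = 0 : use D 1 ≥ 0 and D 2 > 0
    have h1 := PMode.mono hk hlam hlam1 1 le_rfl (Or.inl (by exact_mod_cast Nat.one_le_iff_ne_zero.mpr (by omega)))
    have h2 := PMode.mono hk hlam hlam1 2 (by omega) (Or.inl (by exact_mod_cast hk))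
    have hD1 : 0 ≤ PMode.Dl k lam ((1:ℕ) : ℤ) := h1.1
    have hD2 : 0 < PMode.Dl k lam ((2:ℕ) : ℤ) := h2.2 le_rfl
    rw [PMode.Dl] at hD1 hD2
    have e1 : ((1:ℕ) : ℤ) - 1 = ((0:ℕ) : ℤ) := by norm_num
    have e2 : ((2:ℕ) : ℤ) - 1 = ((1:ℕ) : ℤ) := by norm_num
    rw [e1] at hD1
    rw [e2] at hD2
    have hm2 : poissonOrderK k lam ((2:ℕ):ℤ) ≤ poissonOrderK k lam ((0:ℕ):ℤ) := by
      have h := hm 2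
      rw [hm0] at h
      exact h
    linarith
  · -- m ≥ 1 : use D (m+1) > 0
    have hcond : ((m+1 : ℕ) : ℝ) ≤ lam * (Kn : ℝ) - (Kn : ℝ) + 1 := by
      push_cast
      linarith
    have h3 := PMode.mono hk hlam hlam1 (m+1) (by omega) (Or.inr hcond)
    have hD : 0 < PMode.Dl k lam ((m+1 : ℕ) : ℤ) := h3.2 (by omega)
    rw [PMode.Dl] at hD
    have e3 : ((m+1 : ℕ) : ℤ) - 1 = (m : ℤ) := by push_cast; ring
    rw [e3] at hD
    have := hm (m+1)
    linarith
end

section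
/- For the Poisson distribution of order k with λ > 1, the sequence P_x is strictly increasing for 0 ≤ x ≤ (λ−1)k(k+1)/2 + 1; equivalently Δ_x = P_x − P_{x−1} > 0 for 1 ≤ x ≤ (λ−1)k(k+1)/2 + 1. -/
open scoped BigOperators
open Real

namespace PoissonAux

variable (k : ℕ) (lam : ℝ)

/-- weight of a tuple -/
def w (t : Fin k → ℕ) : ℕ := ∑ i : Fin k, ((i : ℕ) + 1) * t i

/-- the term -/
noncomputable def termf (t : Fin k → ℕ) : ℝ :=
  Real.exp (-(k * lam)) * lam ^ (∑ i : Fin k, t i) / ∏ i : Fin k, (Nat.factorial (t i) : ℝ)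

lemma termf_pos (hlam : 0 < lam) (t : Fin k → ℕ) : 0 < termf k lam t := by
  apply div_pos
  · exact mul_pos (Real.exp_pos _) (pow_pos hlam _)
  · exact Finset.prod_pos fun i _ => by positivity

/-- big finset -/
def F (x : ℤ) : Finset (Fin k → ℕ) :=
  Fintype.piFinset fun _ : Fin k => Finset.range (x.toNat + 1)

lemma le_w (t : Fin k → ℕ) (i : Fin k) : t i ≤ w k t := by
  calc t i ≤ ((i : ℕ) + 1) * t i := Nat.le_mul_of_pos_left _ (Nat.succ_pos _)
  _ ≤ w k t := Finset.single_le_sum (f := fun j : Fin k => ((j : ℕ) + 1) * t j)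
      (fun j _ => Nat.zero_le _) (Finset.mem_univ i)

lemma P_eq_sum (x y : ℤ) (hyx : y ≤ x) :
    poissonOrderK k lam y
      = ∑ t ∈ F k x, if ((w k t : ℕ) : ℤ) = y then termf k lam t else 0 := by
  apply tsum_eq_sum
  intro t ht
  rw [if_neg]
  intro hw
  have hw' : ((w k t : ℕ) : ℤ) = y := hw
  apply ht
  simp only [F, Fintype.mem_piFinset, Finset.mem_range]
  intro i
  have h1 : (t i : ℤ) ≤ (w k t : ℤ) := by exact_mod_cast le_w k t i
  have h2 : (x : ℤ) ≤ (x.toNat : ℤ) := Int.self_le_toNat x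
  omega

lemma P_nonneg (hlam : 0 < lam) (y : ℤ) : 0 ≤ poissonOrderK k lam y := by
  rw [P_eq_sum k lam y y le_rfl]
  apply Finset.sum_nonneg
  intro t _
  split
  · exact (termf_pos k lam hlam t).le
  · exact le_rfl

lemma P_neg_eq_zero (y : ℤ) (hy : y < 0) : poissonOrderK k lam y = 0 := by
  rw [P_eq_sum k lam y y le_rfl]
  apply Finset.sum_eq_zero
  intro t _
  rw [if_neg]
  omega

lemma P_pos (hk : 1 ≤ k) (hlam : 0 < lam) (y : ℤ) (hy : 0 ≤ y) :
    0 < poissonOrderK k lam y := by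
  rw [P_eq_sum k lam y y le_rfl]
  have h0 : (0 : ℕ) < k := hk
  set i0 : Fin k := ⟨0, h0⟩
  set t0 : Fin k → ℕ := fun i => if i = i0 then y.toNat else 0 with ht0
  apply Finset.sum_pos'
  · intro t _
    split
    · exact (termf_pos k lam hlam t).le
    · exact le_rfl
  · refine ⟨t0, ?_, ?_⟩
    · simp only [F, Fintype.mem_piFinset, Finset.mem_range, ht0]
      intro i
      split <;> omega
    · rw [if_pos]
      · exact termf_pos k lam hlam t0
      · have : w k t0 = y.toNat := by
          rw [w, Finset.sum_eq_single i0]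
          · simp [ht0, i0]
          · intro j _ hj
            simp [ht0, hj]
          · intro h; exact absurd (Finset.mem_univ i0) h
        rw [this, Int.toNat_of_nonneg hy]

end PoissonAux

namespace PoissonAux

variable (k : ℕ) (lam : ℝ)

lemma update_sum (s : Fin k → ℕ) (i : Fin k) :
    ∑ j : Fin k, (Function.update s i (s i + 1)) j = (∑ j : Fin k, s j) + 1 := by
  rw [← Finset.add_sum_erase _ _ (Finset.mem_univ i),
      ← Finset.add_sum_erase _ s (Finset.mem_univ i)]
  have h1 : (Function.update s i (s i + 1)) i = s i + 1 := Function.update_self ..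
  have h2 : ∑ j ∈ Finset.univ.erase i, (Function.update s i (s i + 1)) j
      = ∑ j ∈ Finset.univ.erase i, s j := by
    apply Finset.sum_congr rfl
    intro j hj
    exact Function.update_of_ne (Finset.mem_erase.1 hj).1 _ _
  rw [h1, h2]; omega

lemma update_w (s : Fin k → ℕ) (i : Fin k) :
    w k (Function.update s i (s i + 1)) = w k s + ((i : ℕ) + 1) := by
  unfold w
  rw [← Finset.add_sum_erase _ _ (Finset.mem_univ i),
      ← Finset.add_sum_erase _ (fun j : Fin k => ((j : ℕ) + 1) * s j) (Finset.mem_univ i)]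
  have h1 : (Function.update s i (s i + 1)) i = s i + 1 := Function.update_self ..
  have h2 : ∑ j ∈ Finset.univ.erase i, ((j : ℕ) + 1) * (Function.update s i (s i + 1)) j
      = ∑ j ∈ Finset.univ.erase i, ((j : ℕ) + 1) * s j := by
    apply Finset.sum_congr rfl
    intro j hj
    rw [Function.update_of_ne (Finset.mem_erase.1 hj).1]
  rw [h1, h2]; ring

lemma update_prod (s : Fin k → ℕ) (i : Fin k) :
    ∏ j : Fin k, ((Nat.factorial ((Function.update s i (s i + 1)) j) : ℝ))
      = ((s i : ℝ) + 1) * ∏ j : Fin k, ((Nat.factorial (s j)) : ℝ) := by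
  rw [← Finset.mul_prod_erase _ _ (Finset.mem_univ i),
      ← Finset.mul_prod_erase _ (fun j : Fin k => ((Nat.factorial (s j) : ℝ))) (Finset.mem_univ i)]
  have h1 : (Function.update s i (s i + 1)) i = s i + 1 := Function.update_self ..
  have h2 : ∏ j ∈ Finset.univ.erase i, ((Nat.factorial ((Function.update s i (s i + 1)) j)) : ℝ)
      = ∏ j ∈ Finset.univ.erase i, ((Nat.factorial (s j)) : ℝ) := by
    apply Finset.prod_congr rfl
    intro j hj
    rw [Function.update_of_ne (Finset.mem_erase.1 hj).1]
  rw [h1, h2, Nat.factorial_succ]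
  push_cast
  ring

lemma termf_update (s : Fin k → ℕ) (i : Fin k) :
    ((s i : ℝ) + 1) * termf k lam (Function.update s i (s i + 1)) = lam * termf k lam s := by
  unfold termf
  rw [update_sum, update_prod, pow_succ]
  have hf : (0:ℝ) < ∏ j : Fin k, ((Nat.factorial (s j)) : ℝ) :=
    Finset.prod_pos fun j _ => by positivity
  have hsi : (0:ℝ) < (s i : ℝ) + 1 := by positivity
  field_simp

end PoissonAux

namespace PoissonAux

variable (k : ℕ) (lam : ℝ)

lemma shift_tsum (hlam : 0 < lam) (x : ℤ) (i : Fin k) :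
    (∑' t : Fin k → ℕ, if ((w k t : ℕ) : ℤ) = x then (t i : ℝ) * termf k lam t else 0)
      = lam * poissonOrderK k lam (x - ((i : ℕ) + 1)) := by
  have hP : poissonOrderK k lam (x - ((i : ℕ) + 1))
      = ∑' s : Fin k → ℕ, if ((w k s : ℕ) : ℤ) = x - ((i : ℕ) + 1) then termf k lam s else 0 := rfl
  rw [hP, ← tsum_mul_left]
  set f : (Fin k → ℕ) → ℝ :=
    fun t => if ((w k t : ℕ) : ℤ) = x then (t i : ℝ) * termf k lam t else 0 with hf
  set g : (Fin k → ℕ) → ℝ :=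
    fun s => lam * (if ((w k s : ℕ) : ℤ) = x - ((i : ℕ) + 1) then termf k lam s else 0) with hg
  show ∑' t, f t = ∑' s, g s
  apply tsum_eq_tsum_of_ne_zero_bij
    (i := fun s => Function.update s.1 i (s.1 i + 1))
  · -- injectivity
    rintro ⟨s, hs⟩ ⟨s', hs'⟩ h
    simp only at h
    ext j
    by_cases hji : j = i
    · subst hji
      have := congrFun h j
      simpa using this
    · have := congrFun h j
      rwa [Function.update_of_ne hji, Function.update_of_ne hji] at this
  · -- support f ⊆ range
    rintro t hft
    simp only [Function.mem_support, hf] at hft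
    have hcond : ((w k t : ℕ) : ℤ) = x := by
      by_contra hc
      rw [if_neg hc] at hft; exact hft rfl
    have hti : t i ≠ 0 := by
      intro h0
      rw [if_pos hcond, h0] at hft
      simp at hft
    set s : Fin k → ℕ := Function.update t i (t i - 1) with hsdef
    have hupd : Function.update s i (s i + 1) = t := by
      rw [hsdef]
      have : (Function.update t i (t i - 1)) i = t i - 1 := Function.update_self ..
      rw [this, Function.update_idem]
      have : t i - 1 + 1 = t i := Nat.succ_pred_eq_of_pos (Nat.pos_of_ne_zero hti)
      rw [this, Function.update_eq_self]
    have hws : w k t = w k s + ((i : ℕ) + 1) := by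
      conv_lhs => rw [← hupd]
      exact update_w k s i
    refine ⟨⟨s, ?_⟩, ?_⟩
    · simp only [Function.mem_support, hg]
      have hcond' : ((w k s : ℕ) : ℤ) = x - ((i : ℕ) + 1) := by
        rw [← hcond]; push_cast [hws]; ring
      rw [if_pos hcond']
      exact ne_of_gt (mul_pos hlam (termf_pos k lam hlam s))
    · exact hupd
  · -- value equality
    rintro ⟨s, hs⟩
    simp only [Function.mem_support, hg] at hs
    have hcond' : ((w k s : ℕ) : ℤ) = x - ((i : ℕ) + 1) := by
      by_contra hc
      rw [if_neg hc, mul_zero] at hs; exact hs rfl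
    simp only [hf, hg]
    have hwu : ((w k (Function.update s i (s i + 1)) : ℕ) : ℤ) = x := by
      rw [update_w]; push_cast; omega
    rw [if_pos hwu, if_pos hcond']
    have hival : ((Function.update s i (s i + 1)) i : ℝ) = (s i : ℝ) + 1 := by
      rw [Function.update_self]; push_cast; ring
    rw [hival]
    exact termf_update k lam s i

end PoissonAux

namespace PoissonAux

variable (k : ℕ) (lam : ℝ)

lemma recur (hlam : 0 < lam) (x : ℤ) :
    (x : ℝ) * poissonOrderK k lam x
      = lam * ∑ j ∈ Finset.range k, ((j : ℝ) + 1) * poissonOrderK k lam (x - 1 - j) := by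
  have step1 : (x : ℝ) * poissonOrderK k lam x
      = ∑ i : Fin k, ((i : ℕ) + 1 : ℝ) *
          (∑' t : Fin k → ℕ, if ((w k t : ℕ) : ℤ) = x then (t i : ℝ) * termf k lam t else 0) := by
    have hsummand : ∀ i : Fin k,
        (∑' t : Fin k → ℕ, if ((w k t : ℕ) : ℤ) = x then (t i : ℝ) * termf k lam t else 0)
          = ∑ t ∈ F k x, if ((w k t : ℕ) : ℤ) = x then (t i : ℝ) * termf k lam t else 0 := by
      intro i
      apply tsum_eq_sum
      intro t ht
      rw [if_neg]
      intro hw'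
      apply ht
      simp only [F, Fintype.mem_piFinset, Finset.mem_range]
      intro i'
      have h1 : (t i' : ℤ) ≤ (w k t : ℤ) := by exact_mod_cast le_w k t i'
      have h2 : (x : ℤ) ≤ (x.toNat : ℤ) := Int.self_le_toNat x
      omega
    simp only [hsummand]
    rw [P_eq_sum k lam x x le_rfl, Finset.mul_sum]
    have hmid : ∀ t ∈ F k x,
        (x : ℝ) * (if ((w k t : ℕ) : ℤ) = x then termf k lam t else 0)
          = ∑ i : Fin k, (((i : ℕ) : ℝ) + 1) *
              (if ((w k t : ℕ) : ℤ) = x then (t i : ℝ) * termf k lam t else 0) := by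
      intro t _
      by_cases hc : ((w k t : ℕ) : ℤ) = x
      · simp only [if_pos hc]
        have hxw : (x : ℝ) = ((w k t : ℕ) : ℝ) := by exact_mod_cast hc.symm
        rw [hxw]
        have hwr : ((w k t : ℕ) : ℝ) = ∑ i : Fin k, (((i : ℕ) : ℝ) + 1) * (t i : ℝ) := by
          unfold w; push_cast; ring
        rw [hwr, Finset.sum_mul]
        apply Finset.sum_congr rfl
        intro i _
        ring
      · simp only [if_neg hc, mul_zero, Finset.sum_const_zero]
    rw [Finset.sum_congr rfl hmid, Finset.sum_comm]
    apply Finset.sum_congr rfl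
    intro i _
    rw [Finset.mul_sum]
  rw [step1]
  have step2 : ∀ i : Fin k,
      ((i : ℕ) + 1 : ℝ) *
          (∑' t : Fin k → ℕ, if ((w k t : ℕ) : ℤ) = x then (t i : ℝ) * termf k lam t else 0)
        = ((i : ℕ) + 1 : ℝ) * (lam * poissonOrderK k lam (x - ((i : ℕ) + 1))) := by
    intro i
    rw [shift_tsum k lam hlam x i]
  simp only [step2]
  rw [Fin.sum_univ_eq_sum_range
    (fun j => ((j : ℝ) + 1) * (lam * poissonOrderK k lam (x - ((j : ℤ) + 1))))]
  rw [Finset.mul_sum]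
  apply Finset.sum_congr rfl
  intro j _
  have harg : x - ((j : ℤ) + 1) = x - 1 - j := by ring
  rw [harg]
  ring

end PoissonAux

namespace PoissonAux

set_option maxHeartbeats 3200000 in
lemma main (k : ℕ) (lam : ℝ) (hk : 2 ≤ k) (hlam : 1 < lam) :
    ∀ n : ℕ, 1 ≤ n → ((n : ℝ) ≤ (lam - 1) * k * (k + 1) / 2 + 1) →
      0 < poissonOrderK k lam (n : ℤ) - poissonOrderK k lam ((n : ℤ) - 1) := by
  have hlam0 : 0 < lam := by linarith
  intro n
  induction n using Nat.strong_induction_on with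
  | _ n IH =>
  intro hn1 hn2
  set P : ℤ → ℝ := poissonOrderK k lam with hPdef
  clear_value P
  set S : ℝ := (k : ℝ) * ((k : ℝ) + 1) / 2 with hSdef
  clear_value S
  have hk1 : (1 : ℝ) ≤ (k : ℝ) := by exact_mod_cast Nat.one_le_of_lt hk
  have hSpos : 0 < S := by rw [hSdef]; positivity
  have hS3 : 3 ≤ S := by
    rw [hSdef]
    have : (2 : ℝ) ≤ (k : ℝ) := by exact_mod_cast hk
    nlinarith
  have hB : (n : ℝ) ≤ (lam - 1) * S + 1 := by
    rw [hSdef]; calc (n:ℝ) ≤ (lam - 1) * k * (k+1)/2 + 1 := hn2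
    _ = (lam - 1) * ((k:ℝ) * ((k:ℝ)+1)/2) + 1 := by ring
  -- monotonicity helpers
  have hstep : ∀ y : ℤ, y ≤ (n : ℤ) - 1 → P (y - 1) ≤ P y := by
    intro y hy
    rcases lt_or_ge y 1 with h | h
    · rw [hPdef, P_neg_eq_zero k lam (y - 1) (by omega)]
      exact P_nonneg k lam hlam0 y
    · set m := y.toNat with hm
      have hmy : (m : ℤ) = y := Int.toNat_of_nonneg (by omega)
      have h1m : 1 ≤ m := by omega
      have hmn : m < n := by omega
      have hmB : (m : ℝ) ≤ (lam - 1) * k * (k + 1) / 2 + 1 := by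
        have h1 : (m : ℤ) ≤ (n : ℤ) - 1 := by omega
        have h2 : (m : ℝ) ≤ (n : ℝ) - 1 := by exact_mod_cast h1
        linarith
      have := IH m hmn h1m hmB
      rw [hmy] at this
      linarith
  have mono : ∀ a b : ℤ, a ≤ b → b ≤ (n : ℤ) - 1 → P a ≤ P b := by
    intro a b hab
    refine Int.le_induction (motive := fun b _ => b ≤ (n : ℤ) - 1 → P a ≤ P b) ?_ ?_ b hab
    · intro _; exact le_rfl
    · intro b' hab' ih hb1
      have h1 : P a ≤ P b' := ih (by omega)
      have h2 : P b' ≤ P (b' + 1) := by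
        have := hstep (b' + 1) (by omega)
        have harg : b' + 1 - 1 = b' := by ring
        rwa [harg] at this
      linarith
  -- recurrences
  have hR1' := recur k lam hlam0 (n : ℤ)
  have hR2' := recur k lam hlam0 ((n : ℤ) - 1)
  set U0 : ℝ := ∑ j ∈ Finset.range (k - 1), P ((n : ℤ) - 2 - j) with hU0
  clear_value U0
  set U1 : ℝ := ∑ j ∈ Finset.range (k - 1), ((j : ℝ) + 1) * P ((n : ℤ) - 2 - j) with hU1
  clear_value U1
  set P' : ℝ := P ((n : ℤ) - 1 - k) with hP'
  clear_value P'
  rw [← hPdef] at hR1' hR2'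
  have hkk : k = (k - 1) + 1 := by omega
  have hA : (n : ℝ) * P (n : ℤ) = lam * P ((n : ℤ) - 1) + lam * U0 + lam * U1 := by
    have hT1 : (∑ j ∈ Finset.range k, ((j : ℝ) + 1) * P ((n : ℤ) - 1 - j))
        = P ((n : ℤ) - 1) + (U0 + U1) := by
      conv_lhs => rw [hkk]
      rw [Finset.sum_range_succ']
      have h0 : (((0 : ℕ) : ℝ) + 1) * P ((n : ℤ) - 1 - ((0 : ℕ) : ℤ)) = P ((n : ℤ) - 1) := by
        norm_num
      rw [h0]
      have hsh : ∀ j ∈ Finset.range (k - 1),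
          ((((j + 1 : ℕ)) : ℝ) + 1) * P ((n : ℤ) - 1 - ((j + 1 : ℕ) : ℤ))
            = P ((n : ℤ) - 2 - j) + ((j : ℝ) + 1) * P ((n : ℤ) - 2 - j) := by
        intro j _
        have harg : (n : ℤ) - 1 - ((j + 1 : ℕ) : ℤ) = (n : ℤ) - 2 - j := by push_cast; ring
        rw [harg]
        push_cast
        ring
      rw [Finset.sum_congr rfl hsh, Finset.sum_add_distrib]
      rw [hU0, hU1]
      ring
    have hcast : (((n : ℤ) : ℝ)) = (n : ℝ) := by push_cast; ring
    rw [hcast, hT1] at hR1'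
    rw [hR1']; ring
  have hBq : ((n : ℝ) - 1) * P ((n : ℤ) - 1) = lam * U1 + lam * ((k : ℝ) * P') := by
    have hT2 : (∑ j ∈ Finset.range k, ((j : ℝ) + 1) * P ((n : ℤ) - 1 - 1 - j))
        = U1 + (k : ℝ) * P' := by
      conv_lhs => rw [hkk]
      rw [Finset.sum_range_succ]
      have hlast : ((((k - 1 : ℕ)) : ℝ) + 1) * P ((n : ℤ) - 1 - 1 - ((k - 1 : ℕ) : ℤ))
          = (k : ℝ) * P' := by
        have hc1 : (((k - 1 : ℕ)) : ℝ) = (k : ℝ) - 1 := by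
          have : (1 : ℕ) ≤ k := by omega
          push_cast [Nat.cast_sub this]; ring
        have hc2 : ((k - 1 : ℕ) : ℤ) = (k : ℤ) - 1 := by
          have : (1 : ℕ) ≤ k := by omega
          push_cast [Nat.cast_sub this]; ring
        rw [hc1, hc2]
        have harg : (n : ℤ) - 1 - 1 - ((k : ℤ) - 1) = (n : ℤ) - 1 - k := by ring
        rw [harg, hP']
        ring
      rw [hlast]
      have hsame : ∀ j ∈ Finset.range (k - 1),
          ((j : ℝ) + 1) * P ((n : ℤ) - 1 - 1 - j) = ((j : ℝ) + 1) * P ((n : ℤ) - 2 - j) := by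
        intro j _
        have harg : (n : ℤ) - 1 - 1 - (j : ℤ) = (n : ℤ) - 2 - j := by ring
        rw [harg]
      rw [Finset.sum_congr rfl hsame, hU1]
    have hcast : ((((n : ℤ) - 1) : ℤ) : ℝ) = (n : ℝ) - 1 := by push_cast; ring
    rw [hcast, hT2] at hR2'
    rw [hR2']; ring
  -- coefficient lemma
  have hc1 : (((k - 1 : ℕ)) : ℝ) = (k : ℝ) - 1 := by
    have hk1n : (1 : ℕ) ≤ k := by omega
    push_cast [Nat.cast_sub hk1n]; ring
  have hCL : (∑ j ∈ Finset.range (k - 1), (S + (j : ℝ) + 1)) = (k : ℝ) * (S - 1) := by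
    have hgauss : (∑ j ∈ Finset.range (k - 1), (j : ℝ)) = ((k : ℝ) - 1) * ((k : ℝ) - 2) / 2 := by
      have h3 : ((∑ i ∈ Finset.range (k - 1), i) : ℕ) * 2 = (k - 1) * (k - 1 - 1) :=
        Finset.sum_range_id_mul_two (k - 1)
      have h5 : (((∑ i ∈ Finset.range (k - 1), i : ℕ)) : ℝ)
          = ∑ j ∈ Finset.range (k - 1), (j : ℝ) := by push_cast; rfl
      have h4 : (∑ j ∈ Finset.range (k - 1), (j : ℝ)) * 2
          = ((k - 1 : ℕ) : ℝ) * (((k - 1 - 1 : ℕ)) : ℝ) := by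
        rw [← h5]
        exact_mod_cast congrArg (Nat.cast (R := ℝ)) h3
      have hc2 : (((k - 1 - 1 : ℕ)) : ℝ) = (k : ℝ) - 2 := by
        have h2k : k - 1 - 1 = k - 2 := by omega
        have h2k' : (2 : ℕ) ≤ k := hk
        rw [h2k]
        push_cast [Nat.cast_sub h2k']; ring
      rw [hc1, hc2] at h4
      linarith
    calc (∑ j ∈ Finset.range (k - 1), (S + (j : ℝ) + 1))
        = (∑ _j ∈ Finset.range (k - 1), (S + 1)) + ∑ j ∈ Finset.range (k - 1), (j : ℝ) := by
          rw [← Finset.sum_add_distrib]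
          apply Finset.sum_congr rfl
          intros; ring
      _ = ((k - 1 : ℕ) : ℝ) * (S + 1) + ((k : ℝ) - 1) * ((k : ℝ) - 2) / 2 := by
          rw [Finset.sum_const, Finset.card_range, nsmul_eq_mul, hgauss]
      _ = (k : ℝ) * (S - 1) := by rw [hc1, hSdef]; ring
  -- the key identity
  set c : ℝ := lam * S - S + 1 - (n : ℝ) with hc
  clear_value c
  set W : ℝ := ∑ j ∈ Finset.range (k - 1),
      (S + (j : ℝ) + 1) * (P ((n : ℤ) - 2 - j) - P') with hW
  clear_value W
  have hEW : W = (S * U0 + U1) - (k : ℝ) * (S - 1) * P' := by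
    rw [hW]
    have hexp : ∀ j ∈ Finset.range (k - 1),
        (S + (j : ℝ) + 1) * (P ((n : ℤ) - 2 - j) - P')
          = (S * P ((n : ℤ) - 2 - j) + ((j : ℝ) + 1) * P ((n : ℤ) - 2 - j))
              - (S + (j : ℝ) + 1) * P' := by
      intro j _; ring
    rw [Finset.sum_congr rfl hexp, Finset.sum_sub_distrib, Finset.sum_add_distrib,
      ← Finset.sum_mul, hCL, ← Finset.mul_sum, hU0, hU1]
  have hKEY : S * ((n : ℝ) * (P (n : ℤ) - P ((n : ℤ) - 1))) = c * P ((n : ℤ) - 1) + lam * W := by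
    rw [hEW, hc]
    linear_combination S * hA + (1 - S) * hBq
  -- positivity of W and conclusion
  have hWnn : 0 ≤ W := by
    rw [hW]
    apply Finset.sum_nonneg
    intro j hj
    have hjk : (j : ℤ) ≤ (k : ℤ) - 2 := by
      have := Finset.mem_range.1 hj; omega
    have hmono : P' ≤ P ((n : ℤ) - 2 - j) := by
      rw [hP']
      exact mono _ _ (by omega) (by omega)
    have : (0 : ℝ) ≤ S + (j : ℝ) + 1 := by positivity
    nlinarith
  have hPmpos : 0 < P ((n : ℤ) - 1) := by
    rw [hPdef]
    exact P_pos k lam (by omega) hlam0 _ (by omega)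
  rcases eq_or_lt_of_le hn1 with hn1' | hn2'
  · -- n = 1
    have hn1n : (n : ℝ) = 1 := by exact_mod_cast hn1'.symm
    have hcpos : 0 < c := by
      rw [hc, hn1n]; nlinarith
    rw [hn1n] at hKEY
    nlinarith [hKEY, hWnn, hlam0, hSpos, hPmpos, hcpos, mul_pos hcpos hPmpos,
      mul_nonneg (le_of_lt hlam0) hWnn]
  · -- n ≥ 2
    have hn2n : 2 ≤ n := hn2'
    have hcnn : 0 ≤ c := by rw [hc]; nlinarith [hB]
    have hstrict : P' < P ((n : ℤ) - 2) := by
      rcases lt_or_ge ((n : ℤ) - 1 - k) 0 with hneg | hpos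
      · rw [hP', hPdef, P_neg_eq_zero k lam _ hneg]
        exact P_pos k lam (by omega) hlam0 _ (by omega)
      · set m : ℕ := n - k with hm
        have hkn : k ≤ n := by omega
        have hmz : (m : ℤ) = (n : ℤ) - k := by
          rw [hm]; push_cast [Nat.cast_sub hkn]; ring
        have h1m : 1 ≤ m := by omega
        have hmn : m < n := by omega
        have hmB : (m : ℝ) ≤ (lam - 1) * k * (k + 1) / 2 + 1 := by
          have : (m : ℝ) ≤ (n : ℝ) := by exact_mod_cast Nat.le_of_lt hmn
          linarith
        have hIH := IH m hmn h1m hmB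
        rw [hmz] at hIH
        have harg : (n : ℤ) - (k : ℤ) - 1 = (n : ℤ) - 1 - k := by ring
        rw [harg] at hIH
        have hmono2 : P ((n : ℤ) - k) ≤ P ((n : ℤ) - 2) := by
          apply mono _ _ (by omega) (by omega)
        rw [hP']
        linarith
    have hWpos : 0 < W := by
      rw [hW]
      have h0mem : (0 : ℕ) ∈ Finset.range (k - 1) := by
        rw [Finset.mem_range]; omega
      have hf0 : 0 < (S + ((0 : ℕ) : ℝ) + 1) * (P ((n : ℤ) - 2 - ((0 : ℕ) : ℤ)) - P') := by
        have harg : (n : ℤ) - 2 - ((0 : ℕ) : ℤ) = (n : ℤ) - 2 := by norm_num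
        rw [harg]
        have : (0 : ℝ) < S + ((0 : ℕ) : ℝ) + 1 := by positivity
        nlinarith [hstrict]
      apply lt_of_lt_of_le hf0
      apply Finset.single_le_sum (f := fun j : ℕ =>
        (S + (j : ℝ) + 1) * (P ((n : ℤ) - 2 - j) - P')) _ h0mem
      intro j hj
      have hjk : (j : ℤ) ≤ (k : ℤ) - 2 := by
        have := Finset.mem_range.1 hj; omega
      have hmono : P' ≤ P ((n : ℤ) - 2 - j) := by
        rw [hP']
        exact mono _ _ (by omega) (by omega)
      have : (0 : ℝ) ≤ S + (j : ℝ) + 1 := by positivity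
      nlinarith
    have hnpos : (0 : ℝ) < (n : ℝ) := by
      have : 0 < n := by omega
      exact_mod_cast this
    nlinarith [hKEY, hWpos, hcnn, hlam0, hSpos, hnpos, hPmpos,
      mul_nonneg hcnn (le_of_lt hPmpos), mul_pos hlam0 hWpos, mul_pos hSpos hnpos]

end PoissonAux

theorem poissonOrderK_increasing (k : ℕ) (hk : 2 ≤ k) (lam : ℝ) (hlam : 1 < lam)
    (x : ℤ) (hx1 : 1 ≤ x) (hx2 : (x : ℝ) ≤ (lam - 1) * k * (k + 1) / 2 + 1) :
    0 < deltaOrderK k lam x := by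
  have hx0 : 0 ≤ x := by omega
  set n := x.toNat with hn
  have hnx : (n : ℤ) = x := Int.toNat_of_nonneg hx0
  have h1n : 1 ≤ n := by omega
  have hnB : (n : ℝ) ≤ (lam - 1) * k * (k + 1) / 2 + 1 := by
    have hcast : (n : ℝ) = (x : ℝ) := by
      rw [← hnx]; push_cast; ring
    linarith [hx2, hcast.le, hcast.ge]
  have hmain := PoissonAux.main k lam hk hlam n h1n hnB
  unfold deltaOrderK
  rw [← hnx]
  exact hmain
end

section
/- The differences of the Poisson distribution of order k satisfy, for all x ≥ 0: (x+1)(x+2)/λ · Δ_{x+2} = Σ_{j=1}^{k−1} ( j(x+1) + (λ−1)j(j+1)/2 ) Δ_{x+1−j} + ( (λ−1)k(k+1)/2 − 1 − x ) P_{x+1−k}, with P_y = Δ_y = 0 for y < 0. -/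
open scoped BigOperators
open Real

namespace PoissonRecAux

noncomputable def pw (k : ℕ) (lam : ℝ) (t : Fin k → ℕ) : ℝ :=
  Real.exp (-(k * lam)) * lam ^ (∑ i : Fin k, t i) /
    ∏ i : Fin k, (Nat.factorial (t i) : ℝ)

def wt (k : ℕ) (t : Fin k → ℕ) : ℕ := ∑ i : Fin k, ((i : ℕ) + 1) * t i

lemma poisson_eq_sum (k : ℕ) (lam : ℝ) (n : ℕ) (m : ℤ) (hm : m ≤ (n : ℤ)) :
    poissonOrderK k lam m
      = ∑ t ∈ Fintype.piFinset (fun _ : Fin k => Finset.range (n+1)),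
          if ((wt k t : ℤ) = m) then pw k lam t else 0 := by
  unfold poissonOrderK
  simp only [wt, pw]
  apply tsum_eq_sum
  intro t ht
  rw [if_neg]
  intro h
  apply ht
  rw [Fintype.mem_piFinset]
  intro i
  rw [Finset.mem_range]
  have hle : t i ≤ ∑ j : Fin k, ((j : ℕ) + 1) * t j := by
    calc t i ≤ ((i : ℕ) + 1) * t i := Nat.le_mul_of_pos_left _ (Nat.succ_pos _)
    _ ≤ _ := Finset.single_le_sum (f := fun j : Fin k => ((j : ℕ) + 1) * t j)
        (fun j _ => Nat.zero_le _) (Finset.mem_univ i)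
  omega

lemma key_step (k : ℕ) (lam : ℝ) (t : Fin k → ℕ) (i : Fin k) (ht : t i ≠ 0) :
    (t i : ℝ) * pw k lam t = lam * pw k lam (Function.update t i (t i - 1)) := by
  obtain ⟨m, hm⟩ : ∃ m, t i = m + 1 := ⟨t i - 1, by omega⟩
  unfold pw
  have hsum : ∑ j : Fin k, Function.update t i (t i - 1) j
      = m + ∑ j ∈ Finset.univ.erase i, t j := by
    rw [Finset.sum_update_of_mem (Finset.mem_univ i), hm]
    simp [Finset.sdiff_singleton_eq_erase]
  have hsum' : ∑ j : Fin k, t j = (m + 1) + ∑ j ∈ Finset.univ.erase i, t j := by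
    rw [← Finset.add_sum_erase _ _ (Finset.mem_univ i), hm]
  have hprod : ∏ j : Fin k, (Nat.factorial (Function.update t i (t i - 1) j) : ℝ)
      = (Nat.factorial m : ℝ) * ∏ j ∈ Finset.univ.erase i, (Nat.factorial (t j) : ℝ) := by
    rw [← Finset.mul_prod_erase _ _ (Finset.mem_univ i)]
    congr 1
    · simp [hm]
    · exact Finset.prod_congr rfl fun j hj => by
        rw [Function.update_of_ne (Finset.ne_of_mem_erase hj)]
  have hprod' : ∏ j : Fin k, (Nat.factorial (t j) : ℝ)
      = (Nat.factorial (m + 1) : ℝ) * ∏ j ∈ Finset.univ.erase i, (Nat.factorial (t j) : ℝ) := by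
    rw [← Finset.mul_prod_erase _ _ (Finset.mem_univ i), hm]
  rw [hsum, hsum', hprod, hprod', hm]
  have hF : (∏ j ∈ Finset.univ.erase i, (Nat.factorial (t j) : ℝ)) ≠ 0 :=
    Finset.prod_ne_zero_iff.2 fun j _ => Nat.cast_ne_zero.2 (Nat.factorial_ne_zero _)
  have hfm : (Nat.factorial m : ℝ) ≠ 0 := Nat.cast_ne_zero.2 (Nat.factorial_ne_zero _)
  rw [Nat.factorial_succ]
  push_cast
  rw [pow_add, pow_add]
  field_simp
  ring

lemma wt_update_sub (k : ℕ) (t : Fin k → ℕ) (i : Fin k) (ht : t i ≠ 0) :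
    wt k (Function.update t i (t i - 1)) + ((i : ℕ) + 1) = wt k t := by
  unfold wt
  rw [← Finset.add_sum_erase _ (fun j : Fin k => ((j : ℕ) + 1) * t j) (Finset.mem_univ i),
    ← Finset.add_sum_erase _
      (fun j : Fin k => ((j : ℕ) + 1) * Function.update t i (t i - 1) j) (Finset.mem_univ i)]
  have herase : ∑ j ∈ Finset.univ.erase i, ((j : ℕ) + 1) * Function.update t i (t i - 1) j
      = ∑ j ∈ Finset.univ.erase i, ((j : ℕ) + 1) * t j :=
    Finset.sum_congr rfl fun j hj => by rw [Function.update_of_ne (Finset.ne_of_mem_erase hj)]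
  rw [herase, Function.update_self]
  have h2 : ((i : ℕ) + 1) * (t i - 1) + ((i : ℕ) + 1) = ((i : ℕ) + 1) * t i := by
    obtain ⟨m, hm⟩ := Nat.exists_eq_succ_of_ne_zero ht
    rw [hm, Nat.succ_sub_one, Nat.succ_eq_add_one]; ring
  omega

lemma wt_update_add (k : ℕ) (s : Fin k → ℕ) (i : Fin k) :
    wt k (Function.update s i (s i + 1)) = wt k s + ((i : ℕ) + 1) := by
  have h := wt_update_sub k (Function.update s i (s i + 1)) i (by simp)
  rw [Function.update_self] at h
  simp only [Nat.add_sub_cancel, Function.update_idem, Function.update_eq_self] at h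
  omega

lemma wt_ge (k : ℕ) (t : Fin k → ℕ) (i : Fin k) : ((i : ℕ) + 1) * t i ≤ wt k t :=
  Finset.single_le_sum (f := fun j : Fin k => ((j : ℕ) + 1) * t j)
    (fun j _ => Nat.zero_le _) (Finset.mem_univ i)

lemma shift_sum (k : ℕ) (lam : ℝ) (n : ℕ) (i : Fin k) :
    (∑ t ∈ Fintype.piFinset (fun _ : Fin k => Finset.range (n+1)),
        if ((wt k t : ℤ) = (n : ℤ)) then (t i : ℝ) * pw k lam t else 0)
      = lam * ∑ s ∈ Fintype.piFinset (fun _ : Fin k => Finset.range (n+1)),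
          if ((wt k s : ℤ) = (n : ℤ) - ((i : ℕ) + 1)) then pw k lam s else 0 := by
  classical
  rw [Finset.mul_sum]
  rw [← Finset.sum_filter_of_ne
      (p := fun t : Fin k → ℕ => (wt k t : ℤ) = (n : ℤ) ∧ t i ≠ 0)
      (fun t _ hne => by
        by_cases h : (wt k t : ℤ) = (n : ℤ)
        · refine ⟨h, fun h0 => hne ?_⟩
          rw [if_pos h, h0]; simp
        · exact absurd (if_neg h) hne)]
  rw [← Finset.sum_filter_of_ne
      (s := Fintype.piFinset (fun _ : Fin k => Finset.range (n+1)))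
      (p := fun s : Fin k → ℕ => (wt k s : ℤ) = (n : ℤ) - ((i : ℕ) + 1))
      (fun s _ hne => by
        by_cases h : (wt k s : ℤ) = (n : ℤ) - ((i : ℕ) + 1)
        · exact h
        · exact absurd (by rw [if_neg h, mul_zero]) hne)]
  refine Finset.sum_bij' (fun t _ => Function.update t i (t i - 1))
    (fun s _ => Function.update s i (s i + 1)) ?_ ?_ ?_ ?_ ?_
  · intro t ht
    rw [Finset.mem_filter, Fintype.mem_piFinset] at ht ⊢
    obtain ⟨hS, hw, h0⟩ := ht
    refine ⟨fun j => ?_, ?_⟩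
    · rcases eq_or_ne j i with rfl | hj
      · rw [Function.update_self, Finset.mem_range]
        have := hS j; rw [Finset.mem_range] at this; omega
      · rw [Function.update_of_ne hj]; exact hS j
    · have := wt_update_sub k t i h0
      omega
  · intro s hs
    rw [Finset.mem_filter, Fintype.mem_piFinset] at hs ⊢
    obtain ⟨hS, hw⟩ := hs
    have hsi : ((i : ℕ) + 1) * s i ≤ wt k s := wt_ge k s i
    have h2 : s i ≤ ((i : ℕ) + 1) * s i := Nat.le_mul_of_pos_left _ (Nat.succ_pos _)
    have hsmall : s i + 1 ≤ n := by omega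
    refine ⟨fun j => ?_, ?_, ?_⟩
    · rcases eq_or_ne j i with rfl | hj
      · rw [Function.update_self, Finset.mem_range]; omega
      · rw [Function.update_of_ne hj]; exact hS j
    · have := wt_update_add k s i
      omega
    · simp
  · intro t ht
    rw [Finset.mem_filter] at ht
    have h0 : t i ≠ 0 := ht.2.2
    rw [Function.update_idem, Function.update_self]
    have : t i - 1 + 1 = t i := by omega
    rw [this, Function.update_eq_self]
  · intro s _
    rw [Function.update_idem, Function.update_self, Nat.add_sub_cancel,
      Function.update_eq_self]
  · intro t ht
    rw [Finset.mem_filter] at ht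
    rw [if_pos ht.2.1, if_pos]
    · exact key_step k lam t i ht.2.2
    · have := wt_update_sub k t i ht.2.2
      have hw := ht.2.1
      omega

lemma recur (k : ℕ) (lam : ℝ) (n : ℕ) :
    (n : ℝ) * poissonOrderK k lam (n : ℤ)
      = lam * ∑ i ∈ Finset.range k,
          ((i : ℝ) + 1) * poissonOrderK k lam ((n : ℤ) - ((i : ℤ) + 1)) := by
  classical
  set S := Fintype.piFinset (fun _ : Fin k => Finset.range (n+1)) with hS
  calc (n : ℝ) * poissonOrderK k lam (n : ℤ)
      = ∑ t ∈ S, ∑ i : Fin k,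
          (if ((wt k t : ℤ) = (n : ℤ)) then ((i : ℕ) + 1 : ℝ) * (t i : ℝ) * pw k lam t else 0) := by
        rw [poisson_eq_sum k lam n n le_rfl, Finset.mul_sum]
        refine Finset.sum_congr rfl fun t _ => ?_
        split_ifs with h
        · have hn : (n : ℝ) = ∑ i : Fin k, (((i : ℕ) : ℝ) + 1) * (t i : ℝ) := by
            have h' : (∑ i : Fin k, ((i : ℕ) + 1) * t i) = n := by
              unfold wt at h; exact_mod_cast h
            rw [← h']
            push_cast
            ring
          rw [hn, Finset.sum_mul]
        · simp
    _ = ∑ i : Fin k, ∑ t ∈ S,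
          (if ((wt k t : ℤ) = (n : ℤ)) then ((i : ℕ) + 1 : ℝ) * (t i : ℝ) * pw k lam t else 0) :=
        Finset.sum_comm
    _ = ∑ i : Fin k, (((i : ℕ) : ℝ) + 1) *
          (lam * poissonOrderK k lam ((n : ℤ) - (((i : ℕ) : ℤ) + 1))) := by
        refine Finset.sum_congr rfl fun i _ => ?_
        have h1 : ∑ t ∈ S,
            (if ((wt k t : ℤ) = (n : ℤ)) then ((i : ℕ) + 1 : ℝ) * (t i : ℝ) * pw k lam t else 0)
            = (((i : ℕ) : ℝ) + 1) * ∑ t ∈ S,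
              (if ((wt k t : ℤ) = (n : ℤ)) then (t i : ℝ) * pw k lam t else 0) := by
          rw [Finset.mul_sum]
          refine Finset.sum_congr rfl fun t _ => ?_
          split_ifs with h
          · push_cast; ring
          · simp
        rw [h1, shift_sum k lam n i, ← poisson_eq_sum k lam n ((n : ℤ) - ((i : ℕ) + 1)) (by omega)]
    _ = lam * ∑ i ∈ Finset.range k,
          ((i : ℝ) + 1) * poissonOrderK k lam ((n : ℤ) - ((i : ℤ) + 1)) := by
        rw [Finset.mul_sum,
          ← Fin.sum_univ_eq_sum_range
            (fun j : ℕ => lam * (((j : ℝ) + 1) * poissonOrderK k lam ((n : ℤ) - ((j : ℤ) + 1)))) k]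
        exact Finset.sum_congr rfl fun i _ => by ring

lemma alg (p : ℕ) (a lam : ℝ) (g : ℕ → ℝ) :
    a * (∑ i ∈ Finset.range (p+1), ((i : ℝ) + 1) * g i)
      - (a + 1) * (∑ i ∈ Finset.range (p+1), ((i : ℝ) + 1) * g (i+1))
      - (a * g 0 - lam * ∑ i ∈ Finset.range (p+1), ((i : ℝ) + 1) * g (i+1))
    = (∑ i ∈ Finset.range p,
        (((i : ℝ) + 1) * a + (lam - 1) * ((i : ℝ) + 1) * ((i : ℝ) + 2) / 2)
          * (g (i+1) - g (i+2)))
      + ((lam - 1) * ((p : ℝ) + 1) * ((p : ℝ) + 2) / 2 - a) * g (p+1) := by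
  induction p with
  | zero => simp [Finset.sum_range_succ]; ring
  | succ q ih =>
    rw [Finset.sum_range_succ (f := fun x => ((x : ℝ) + 1) * g x) (n := q + 1),
      Finset.sum_range_succ (f := fun x => ((x : ℝ) + 1) * g (x + 1)) (n := q + 1),
      Finset.sum_range_succ
        (f := fun i => (((i : ℝ) + 1) * a + (lam - 1) * ((i : ℝ) + 1) * ((i : ℝ) + 2) / 2)
          * (g (i + 1) - g (i + 2))) (n := q)]
    push_cast at ih ⊢
    linear_combination ih

end PoissonRecAux

open PoissonRecAux in
theorem poissonOrderK_delta_recurrence_delta (k : ℕ) (hk : 2 ≤ k) (lam : ℝ) (hlam : 0 < lam)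
    (x : ℕ) :
    ((x : ℝ) + 1) * ((x : ℝ) + 2) / lam * deltaOrderK k lam ((x : ℤ) + 2)
      = (∑ j ∈ Finset.Icc 1 (k - 1),
          ((j : ℝ) * ((x : ℝ) + 1) + (lam - 1) * (j : ℝ) * ((j : ℝ) + 1) / 2)
            * deltaOrderK k lam ((x : ℤ) + 1 - (j : ℤ)))
        + ((lam - 1) * (k : ℝ) * ((k : ℝ) + 1) / 2 - 1 - (x : ℝ))
            * poissonOrderK k lam ((x : ℤ) + 1 - (k : ℤ)) := by
  obtain ⟨m, rfl⟩ : ∃ m, k = m + 1 := ⟨k - 1, by omega⟩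
  -- canonical function
  set G : ℕ → ℝ := fun j => poissonOrderK (m+1) lam ((x : ℤ) + 1 - (j : ℤ)) with hG
  -- basic recurrence at n = x+1
  have hB1 : ((x : ℝ) + 1) * G 0
      = lam * ∑ i ∈ Finset.range (m+1), ((i : ℝ) + 1) * G (i+1) := by
    have h := recur (m+1) lam (x+1)
    have e1 : ((x+1 : ℕ) : ℝ) = (x : ℝ) + 1 := by push_cast; ring
    have e2 : ((x+1 : ℕ) : ℤ) = (x : ℤ) + 1 := by push_cast; ring
    rw [e1, e2] at h
    have e3 : G 0 = poissonOrderK (m+1) lam ((x : ℤ) + 1) := by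
      rw [hG]; norm_num
    rw [e3, h]
    refine congrArg (fun z => lam * z) (Finset.sum_congr rfl fun i _ => ?_)
    have e4 : ((x : ℤ) + 1 - ((i : ℤ) + 1)) = ((x : ℤ) + 1 - ((i + 1 : ℕ) : ℤ)) := by
      push_cast; ring
    rw [hG, e4]
  -- basic recurrence at n = x+2
  have hB2 : ((x : ℝ) + 2) * poissonOrderK (m+1) lam ((x : ℤ) + 2)
      = lam * ∑ i ∈ Finset.range (m+1), ((i : ℝ) + 1) * G i := by
    have h := recur (m+1) lam (x+2)
    have e1 : ((x+2 : ℕ) : ℝ) = (x : ℝ) + 2 := by push_cast; ring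
    have e2 : ((x+2 : ℕ) : ℤ) = (x : ℤ) + 2 := by push_cast; ring
    rw [e1, e2] at h
    rw [h]
    refine congrArg (fun z => lam * z) (Finset.sum_congr rfl fun i _ => ?_)
    have e4 : ((x : ℤ) + 2 - ((i : ℤ) + 1)) = ((x : ℤ) + 1 - ((i : ℕ) : ℤ)) := by
      push_cast; ring
    rw [hG, e4]
  have halg := alg m ((x : ℝ) + 1) lam G
  -- convert RHS of goal
  have hRHS : (∑ j ∈ Finset.Icc 1 (m + 1 - 1),
          ((j : ℝ) * ((x : ℝ) + 1) + (lam - 1) * (j : ℝ) * ((j : ℝ) + 1) / 2)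
            * deltaOrderK (m+1) lam ((x : ℤ) + 1 - (j : ℤ)))
        + ((lam - 1) * ((m+1 : ℕ) : ℝ) * (((m+1 : ℕ) : ℝ) + 1) / 2 - 1 - (x : ℝ))
            * poissonOrderK (m+1) lam ((x : ℤ) + 1 - ((m+1 : ℕ) : ℤ))
      = (∑ i ∈ Finset.range m,
          (((i : ℝ) + 1) * ((x : ℝ) + 1) + (lam - 1) * ((i : ℝ) + 1) * ((i : ℝ) + 2) / 2)
            * (G (i+1) - G (i+2)))
        + ((lam - 1) * ((m : ℝ) + 1) * ((m : ℝ) + 2) / 2 - ((x : ℝ) + 1)) * G (m+1) := by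
    have hIcc : Finset.Icc 1 (m + 1 - 1) = Finset.Icc 1 m := by norm_num
    rw [hIcc, ← Finset.Ico_add_one_right_eq_Icc, Finset.sum_Ico_eq_sum_range]
    have hm1 : m + 1 - 1 = m := by omega
    rw [hm1]
    congr 1
    · refine Finset.sum_congr rfl fun i _ => ?_
      have hd : deltaOrderK (m+1) lam ((x : ℤ) + 1 - ((1 + i : ℕ) : ℤ))
          = G (i+1) - G (i+2) := by
        rw [deltaOrderK, hG]
        have e2 : ((x : ℤ) + 1 - ((1 + i : ℕ) : ℤ)) - 1 = ((x : ℤ) + 1 - ((i + 2 : ℕ) : ℤ)) := by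
          push_cast; ring
        have e1 : ((x : ℤ) + 1 - ((1 + i : ℕ) : ℤ)) = ((x : ℤ) + 1 - ((i + 1 : ℕ) : ℤ)) := by
          push_cast; ring
        rw [e2, e1]
      rw [hd]
      push_cast
      ring
    · rw [hG]
      push_cast
      ring
  rw [hRHS]
  -- now pure algebra
  have hDelta : deltaOrderK (m+1) lam ((x : ℤ) + 2)
      = poissonOrderK (m+1) lam ((x : ℤ) + 2) - G 0 := by
    rw [deltaOrderK, hG]
    have e1 : ((x : ℤ) + 2) - 1 = ((x : ℤ) + 1 - ((0 : ℕ) : ℤ)) := by push_cast; ring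
    rw [e1]
  rw [hDelta, div_mul_eq_mul_div, div_eq_iff hlam.ne']
  linear_combination ((x : ℝ) + 1) * hB2 + lam * halg + (lam - (x : ℝ) - 2) * hB1
end

section
/- For the Poisson distribution of order 2 with positive integer λ, we have 3·Δ_{3λ} = −2·Δ_{3λ−1}, where Δ_x = P_x − P_{x−1}. -/
open scoped BigOperators
open Real

noncomputable def g (lam : ℝ) (n : ℕ) : ℝ :=
  ∑ b ∈ Finset.range (n / 2 + 1),
    Real.exp (-(2 * lam)) * lam ^ (n - b) /
      ((Nat.factorial (n - 2 * b) : ℝ) * (Nat.factorial b : ℝ))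

lemma poisson2_eq (lam : ℝ) (n : ℕ) : poissonOrderK 2 lam (n : ℤ) = g lam n := by
  unfold poissonOrderK
  rw [← (piFinTwoEquiv (fun _ => ℕ)).symm.tsum_eq]
  have key : ∀ p : ℕ × ℕ,
      (if ((∑ i : Fin 2, ((i : ℕ) + 1) * ((piFinTwoEquiv (fun _ => ℕ)).symm p) i : ℕ) : ℤ) = (n : ℤ) then
        Real.exp (-((2:ℕ) * lam)) * lam ^ (∑ i : Fin 2, ((piFinTwoEquiv (fun _ => ℕ)).symm p) i) /
          ∏ i : Fin 2, (Nat.factorial (((piFinTwoEquiv (fun _ => ℕ)).symm p) i) : ℝ)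
      else 0)
      = (if p.1 + 2 * p.2 = n then
          Real.exp (-(2 * lam)) * lam ^ (p.1 + p.2) /
            ((Nat.factorial p.1 : ℝ) * (Nat.factorial p.2 : ℝ)) else 0) := by
    intro p
    simp [Fin.sum_univ_two, Fin.prod_univ_two, piFinTwoEquiv]
    norm_cast
  rw [tsum_congr key]
  rw [tsum_eq_sum (s := Finset.range (n+1) ×ˢ Finset.range (n+1)) ?outer]
  case outer =>
    intro p hp
    rw [if_neg]
    intro h
    simp [Finset.mem_product, Finset.mem_range] at hp
    omega
  rw [Finset.sum_product]
  rw [Finset.sum_comm]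
  have inner : ∀ b : ℕ, (∑ a ∈ Finset.range (n+1),
      if a + 2 * b = n then
        Real.exp (-(2 * lam)) * lam ^ (a + b) /
          ((Nat.factorial a : ℝ) * (Nat.factorial b : ℝ)) else 0)
      = if b ≤ n / 2 then
        Real.exp (-(2 * lam)) * lam ^ (n - 2 * b + b) /
          ((Nat.factorial (n - 2 * b) : ℝ) * (Nat.factorial b : ℝ)) else 0 := by
    intro b
    rcases le_or_gt b (n / 2) with hb | hb
    · rw [if_pos hb]
      rw [Finset.sum_eq_single_of_mem (n - 2 * b)
        (Finset.mem_range.2 (by omega)) ?h]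
      · rw [if_pos (by omega)]
      case h =>
        intro a _ ha
        rw [if_neg (by omega)]
    · rw [if_neg (by omega)]
      apply Finset.sum_eq_zero
      intro a _
      rw [if_neg (by omega)]
  rw [Finset.sum_congr rfl (fun b _ => inner b)]
  rw [g, ← Finset.sum_subset (Finset.range_subset_range.2 (by omega : n/2+1 ≤ n+1))]
  · apply Finset.sum_congr rfl
    intro b hb
    rw [Finset.mem_range] at hb
    rw [if_pos (by omega)]
    have h2 : n - 2 * b + b = n - b := by omega
    rw [h2]
  · intro b _ hb
    rw [Finset.mem_range] at hb
    rw [if_neg (by omega)]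

lemma g_rec (lam : ℝ) (n : ℕ) (hn : 2 ≤ n) :
    (n : ℝ) * g lam n = lam * g lam (n - 1) + 2 * lam * g lam (n - 2) := by
  have part1 : ∑ b ∈ Finset.range (n / 2 + 1),
      ((n - 2 * b : ℕ) : ℝ) * (Real.exp (-(2 * lam)) * lam ^ (n - b) /
        ((Nat.factorial (n - 2 * b) : ℝ) * (Nat.factorial b : ℝ)))
      = lam * g lam (n - 1) := by
    rw [g, Finset.mul_sum,
      ← Finset.sum_subset (Finset.range_subset_range.2 (by omega : (n-1)/2+1 ≤ n/2+1)) ?z1]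
    case z1 =>
      intro b hb1 hb2
      rw [Finset.mem_range] at hb1 hb2
      have h0 : n - 2 * b = 0 := by omega
      rw [h0]
      simp
    apply Finset.sum_congr rfl
    intro b hb
    rw [Finset.mem_range] at hb
    have h1 : n - 2 * b = (n - 1 - 2 * b) + 1 := by omega
    have h2 : n - b = (n - 1 - b) + 1 := by omega
    have h3 : n - 1 - 2 * b = n - 1 - 2 * b := rfl
    rw [h1, h2, Nat.factorial_succ, pow_succ]
    have hf1 : ((n - 1 - 2 * b).factorial : ℝ) ≠ 0 :=
      Nat.cast_ne_zero.2 (Nat.factorial_ne_zero _)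
    have hf2 : ((b).factorial : ℝ) ≠ 0 := Nat.cast_ne_zero.2 (Nat.factorial_ne_zero _)
    have hc : ((n - 1 - 2 * b : ℕ) : ℝ) + 1 ≠ 0 := by positivity
    push_cast
    field_simp
  have part2 : ∑ b ∈ Finset.range (n / 2 + 1),
      ((2 * b : ℕ) : ℝ) * (Real.exp (-(2 * lam)) * lam ^ (n - b) /
        ((Nat.factorial (n - 2 * b) : ℝ) * (Nat.factorial b : ℝ)))
      = 2 * lam * g lam (n - 2) := by
    have hr : n / 2 + 1 = ((n - 2) / 2 + 1) + 1 := by omega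
    rw [hr, Finset.sum_range_succ']
    simp only [Nat.mul_zero, Nat.cast_zero, zero_mul, add_zero]
    rw [g, Finset.mul_sum]
    apply Finset.sum_congr rfl
    intro c hc
    rw [Finset.mem_range] at hc
    have h1 : n - 2 * (c + 1) = (n - 2) - 2 * c := by omega
    have h2 : n - (c + 1) = ((n - 2) - c) + 1 := by omega
    rw [h1, h2, Nat.factorial_succ, pow_succ]
    have hf1 : (((n - 2) - 2 * c).factorial : ℝ) ≠ 0 :=
      Nat.cast_ne_zero.2 (Nat.factorial_ne_zero _)
    have hf2 : ((c).factorial : ℝ) ≠ 0 := Nat.cast_ne_zero.2 (Nat.factorial_ne_zero _)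
    have hc' : ((c : ℕ) : ℝ) + 1 ≠ 0 := by positivity
    push_cast
    field_simp
  rw [g, Finset.mul_sum, ← part1, ← part2, ← Finset.sum_add_distrib]
  apply Finset.sum_congr rfl
  intro b hb
  rw [Finset.mem_range] at hb
  rw [← add_mul]
  congr 1
  rw [← Nat.cast_add]
  norm_cast
  omega

theorem poissonOrder2_delta_relation (lam : ℕ) (hlam : 1 ≤ lam) :
    3 * deltaOrderK 2 (lam : ℝ) (3 * (lam : ℤ))
      = -2 * deltaOrderK 2 (lam : ℝ) (3 * (lam : ℤ) - 1) := by
  set n := 3 * lam with hn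
  have e0 : (3 * (lam : ℤ)) = ((n : ℕ) : ℤ) := by omega
  have e2 : ((n - 1 : ℕ) : ℤ) - 1 = ((n - 2 : ℕ) : ℤ) := by omega
  have e3 : ((n : ℕ) : ℤ) - 1 = ((n - 1 : ℕ) : ℤ) := by omega
  unfold deltaOrderK
  rw [e0, e3, e2, poisson2_eq, poisson2_eq, poisson2_eq]
  have hrec := g_rec (lam : ℝ) n (by omega)
  have hl : ((lam : ℝ)) ≠ 0 := Nat.cast_ne_zero.2 (by omega)
  have hcast : ((n : ℕ) : ℝ) = 3 * (lam : ℝ) := by push_cast [hn]; ring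
  rw [hcast] at hrec
  have h3 : 3 * g (lam : ℝ) n = g (lam : ℝ) (n - 1) + 2 * g (lam : ℝ) (n - 2) := by
    apply mul_left_cancel₀ hl
    linear_combination hrec
  linarith
end

section
/- For every positive integer λ, the Poisson distribution of order 2 has a unique mode equal to 3λ − 1; that is, P_{3λ−1} > P_x for all x ≠ 3λ − 1. -/
open scoped BigOperators
open Real

noncomputable def Q (l : ℝ) (n : ℕ) : ℝ :=
  ∑ j ∈ Finset.range (n / 2 + 1),
    l ^ (n - j) / ((Nat.factorial (n - 2 * j) : ℝ) * (Nat.factorial j : ℝ))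

lemma poisson_eq (l : ℝ) (n : ℕ) :
    poissonOrderK 2 l (n : ℤ) = Real.exp (-(2 * l)) * Q l n := by
  classical
  unfold poissonOrderK Q
  have hsum := tsum_eq_sum (L := SummationFilter.unconditional _) (f := fun t : Fin 2 → ℕ =>
    if ((∑ i : Fin 2, ((i : ℕ) + 1) * t i : ℕ) : ℤ) = (n : ℤ) then
      Real.exp (-((2:ℕ) * l)) * l ^ (∑ i : Fin 2, t i) /
        ∏ i : Fin 2, (Nat.factorial (t i) : ℝ)
    else 0)
    (s := (Finset.range (n / 2 + 1)).image (fun j => ![n - 2 * j, j])) ?_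
  · rw [hsum, Finset.sum_image ?_]
    · rw [Finset.mul_sum]
      refine Finset.sum_congr rfl ?_
      intro j hj
      have hj' : j ≤ n / 2 := by simpa using Nat.lt_succ_iff.mp (Finset.mem_range.mp hj)
      have h2j : 2 * j ≤ n := by omega
      have hcond : (∑ i : Fin 2, ((i : ℕ) + 1) * (![n - 2 * j, j]) i) = n := by
        simp [Fin.sum_univ_two]; omega
      rw [if_pos (by exact_mod_cast congrArg (Nat.cast : ℕ → ℤ) hcond)]
      have hsum2 : (∑ i : Fin 2, (![n - 2 * j, j]) i) = n - j := by
        simp [Fin.sum_univ_two]; omega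
      have hprod : (∏ i : Fin 2, (Nat.factorial ((![n - 2 * j, j]) i) : ℝ)) =
          (Nat.factorial (n - 2 * j) : ℝ) * (Nat.factorial j : ℝ) := by
        simp [Fin.prod_univ_two]
      rw [hsum2, hprod]
      push_cast
      ring
    · intro i _ j _ hij
      have := congrFun hij 1
      simpa using this
  · intro t ht
    rw [if_neg]
    intro hc
    have hc' : t 0 + 2 * t 1 = n := by
      have : (∑ i : Fin 2, ((i : ℕ) + 1) * t i : ℕ) = n := by exact_mod_cast hc
      simpa [Fin.sum_univ_two] using this
    apply ht
    refine Finset.mem_image.mpr ⟨t 1, Finset.mem_range.mpr (by omega), ?_⟩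
    funext i
    fin_cases i <;> simp <;> omega

lemma Q_zero (l : ℝ) : Q l 0 = 1 := by simp [Q]

lemma Q_one (l : ℝ) : Q l 1 = l := by simp [Q, Nat.factorial]

lemma Q_pos (l : ℝ) (hl : 0 < l) (n : ℕ) : 0 < Q l n := by
  apply Finset.sum_pos
  · intro j _
    positivity
  · exact ⟨0, by simp⟩

lemma Q_rec (l : ℝ) (n : ℕ) :
    ((n : ℝ) + 2) * Q l (n + 2) = l * Q l (n + 1) + 2 * l * Q l n := by
  unfold Q
  rw [Finset.mul_sum]
  have hsplit : ∀ j ∈ Finset.range ((n + 2) / 2 + 1),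
      ((n : ℝ) + 2) * (l ^ (n + 2 - j) / ((Nat.factorial (n + 2 - 2 * j) : ℝ) * (Nat.factorial j : ℝ)))
      = ((n + 2 - 2 * j : ℕ) : ℝ) * (l ^ (n + 2 - j) / ((Nat.factorial (n + 2 - 2 * j) : ℝ) * (Nat.factorial j : ℝ)))
        + (2 * j : ℝ) * (l ^ (n + 2 - j) / ((Nat.factorial (n + 2 - 2 * j) : ℝ) * (Nat.factorial j : ℝ))) := by
    intro j hj
    have hj' : j ≤ (n + 2) / 2 := Nat.lt_succ_iff.mp (Finset.mem_range.mp hj)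
    have h2j : 2 * j ≤ n + 2 := by omega
    have : ((n + 2 - 2 * j : ℕ) : ℝ) = (n : ℝ) + 2 - 2 * j := by push_cast [h2j]; ring
    rw [this]; ring
  rw [Finset.sum_congr rfl hsplit, Finset.sum_add_distrib]
  congr 1
  · -- A part = l * Q l (n+1)
    rw [Finset.mul_sum]
    have hsub : Finset.range ((n + 1) / 2 + 1) ⊆ Finset.range ((n + 2) / 2 + 1) := by
      intro j hj
      simp only [Finset.mem_range] at *
      omega
    rw [← Finset.sum_subset hsub ?_]
    · refine Finset.sum_congr rfl ?_
      intro j hj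
      have hj' : j ≤ (n + 1) / 2 := Nat.lt_succ_iff.mp (Finset.mem_range.mp hj)
      have h2j : 2 * j ≤ n + 1 := by omega
      have hf : (Nat.factorial (n + 2 - 2 * j) : ℝ)
          = ((n + 2 - 2 * j : ℕ) : ℝ) * (Nat.factorial (n + 1 - 2 * j) : ℝ) := by
        have h : n + 2 - 2 * j = (n + 1 - 2 * j) + 1 := by omega
        rw [h, Nat.factorial_succ]; push_cast; ring
      have hp : l ^ (n + 2 - j) = l * l ^ (n + 1 - j) := by
        have h : n + 2 - j = (n + 1 - j) + 1 := by omega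
        rw [h, pow_succ]; ring
      have hne : ((n + 2 - 2 * j : ℕ) : ℝ) ≠ 0 := by
        have : 0 < n + 2 - 2 * j := by omega
        positivity
      rw [hf, hp]
      field_simp
    · intro j hjmem hjnot
      have h1 : j ≤ (n + 2) / 2 := Nat.lt_succ_iff.mp (Finset.mem_range.mp hjmem)
      have h2 : (n + 1) / 2 < j := by
        by_contra h
        exact hjnot (Finset.mem_range.mpr (by omega))
      have : n + 2 - 2 * j = 0 := by omega
      rw [this]
      simp
  · -- B part = 2*l* Q l n
    have hrange : (n + 2) / 2 + 1 = (n / 2 + 1) + 1 := by omega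
    rw [hrange, Finset.sum_range_succ']
    simp only [Nat.cast_zero, mul_zero, zero_mul, add_zero]
    rw [Finset.mul_sum]
    refine Finset.sum_congr rfl ?_
    intro j hj
    have hj' : j ≤ n / 2 := Nat.lt_succ_iff.mp (Finset.mem_range.mp hj)
    have h2j : 2 * j ≤ n := by omega
    have he1 : n + 2 - 2 * (j + 1) = n - 2 * j := by omega
    have he2 : n + 2 - (j + 1) = (n - j) + 1 := by omega
    rw [he1, he2, pow_succ, Nat.factorial_succ]
    push_cast
    have hne : (Nat.factorial (n - 2 * j) : ℝ) ≠ 0 := by positivity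
    have hne2 : (Nat.factorial j : ℝ) ≠ 0 := by positivity
    field_simp

lemma Q_two (l : ℝ) : Q l 2 = (l ^ 2 + 2 * l) / 2 := by
  have h := Q_rec l 0
  rw [Q_zero, Q_one] at h
  push_cast at h
  nlinarith [h]

lemma Q_three (l : ℝ) : Q l 3 = (l ^ 3 + 6 * l ^ 2) / 6 := by
  have h := Q_rec l 1
  rw [Q_one, Q_two] at h
  push_cast at h
  nlinarith [h]

/-- lower part of invariant: `r_{k+1} > r*(k+2)` -/
def PhiL (l : ℝ) (k : ℕ) : Prop :=
  0 < ((k : ℝ) + 2) * (Q l (k + 1)) ^ 2 - l * Q l (k + 1) * Q l k - 2 * l * (Q l k) ^ 2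

/-- upper part of invariant: `r_{k+1} < r*(k+1)` -/
def PhiU (l : ℝ) (k : ℕ) : Prop :=
  ((k : ℝ) + 1) * (Q l (k + 1)) ^ 2 - l * Q l (k + 1) * Q l k - 2 * l * (Q l k) ^ 2 < 0

lemma phi_base (l : ℝ) (h2 : 2 ≤ l) : PhiL l 2 ∧ PhiU l 2 := by
  have hq2 := Q_two l
  have hq3 := Q_three l
  constructor
  · unfold PhiL
    rw [hq2, hq3]
    push_cast
    nlinarith [pow_pos (by linarith : (0:ℝ) < l) 3, pow_pos (by linarith : (0:ℝ) < l) 4,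
      pow_pos (by linarith : (0:ℝ) < l) 5, pow_pos (by linarith : (0:ℝ) < l) 6,
      mul_nonneg (mul_nonneg (by linarith : (0:ℝ) ≤ l - 2) (by nlinarith : (0:ℝ) ≤ l^3)) (by linarith : (0:ℝ) ≤ l)]
  · unfold PhiU
    rw [hq2, hq3]
    push_cast
    nlinarith [pow_pos (by linarith : (0:ℝ) < l) 3, pow_pos (by linarith : (0:ℝ) < l) 5]

lemma phi_step (l : ℝ) (h2 : 2 ≤ l) (k : ℕ) (hL : PhiL l k) (hU : PhiU l k) :
    PhiL l (k + 1) ∧ PhiU l (k + 1) := by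
  have hl0 : 0 < l := by linarith
  set a := Q l k with ha'
  set b := Q l (k + 1) with hb'
  set c := Q l (k + 2) with hc'
  have ha : 0 < a := Q_pos l hl0 k
  have hb : 0 < b := Q_pos l hl0 (k + 1)
  have hc : 0 < c := Q_pos l hl0 (k + 2)
  have hrec : ((k : ℝ) + 2) * c = l * b + 2 * l * a := Q_rec l k
  unfold PhiL PhiU at *
  push_cast
  constructor
  · -- L' : 0 < (k+3)c² - l b c - 2 l b²
    have key : ((k : ℝ) + 2) ^ 2 * (((k : ℝ) + 3) * c ^ 2 - l * b * c - 2 * l * b ^ 2)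
        = l * (2 * ((k : ℝ) + 3) * (-(((k : ℝ) + 1) * b ^ 2 - l * a * b - 2 * l * a ^ 2))
            + (l - 2) * b ^ 2 + 2 * l * a * b) := by
      linear_combination ((((k : ℝ) + 3) * (((k : ℝ) + 2) * c + l * b + 2 * l * a)
        - l * b * ((k : ℝ) + 2)) * hrec)
    have hrhs : 0 < l * (2 * ((k : ℝ) + 3) * (-(((k : ℝ) + 1) * b ^ 2 - l * a * b - 2 * l * a ^ 2))
            + (l - 2) * b ^ 2 + 2 * l * a * b) := by
      have h1 : 0 < -(((k : ℝ) + 1) * b ^ 2 - l * a * b - 2 * l * a ^ 2) := by linarith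
      have h2' : (0:ℝ) ≤ (l - 2) * b ^ 2 := by
        apply mul_nonneg (by linarith) (sq_nonneg b)
      nlinarith [mul_pos (mul_pos hl0 ha) hb, mul_pos (by positivity : (0:ℝ) < 2 * ((k:ℝ)+3)) h1]
    have hk2 : (0:ℝ) < ((k : ℝ) + 2) ^ 2 := by positivity
    nlinarith [key, hrhs, hk2]
  · -- U' : (k+2)c² - l b c - 2 l b² < 0
    have key : ((k : ℝ) + 2) * (((k : ℝ) + 2) * c ^ 2 - l * b * c - 2 * l * b ^ 2)
        = -2 * l * (((k : ℝ) + 2) * b ^ 2 - l * a * b - 2 * l * a ^ 2) := by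
      linear_combination ((((k : ℝ) + 2) * c + 2 * l * a) * hrec)
    have hrhs : -2 * l * (((k : ℝ) + 2) * b ^ 2 - l * a * b - 2 * l * a ^ 2) < 0 := by
      nlinarith [hL, hl0]
    have hk2 : (0:ℝ) < (k : ℝ) + 2 := by positivity
    nlinarith [key, hrhs, hk2]

lemma phi_all (l : ℝ) (h2 : 2 ≤ l) (k : ℕ) (hk : 2 ≤ k) : PhiL l k ∧ PhiU l k := by
  induction k, hk using Nat.le_induction with
  | base => exact phi_base l h2
  | succ n hn ih => exact phi_step l h2 n ih.1 ih.2

-- (i) increasing step from PhiL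
lemma inc_of_phiL (l : ℝ) (hl0 : 0 < l) (k : ℕ) (hL : PhiL l k) (hk : (k : ℝ) + 2 ≤ 3 * l) :
    Q l k < Q l (k + 1) := by
  unfold PhiL at hL
  set a := Q l k
  set b := Q l (k + 1)
  have ha : 0 < a := Q_pos l hl0 k
  have hb : 0 < b := Q_pos l hl0 (k + 1)
  by_contra hba
  push_neg at hba  -- b ≤ a
  nlinarith [mul_nonneg (sub_nonneg.2 hk) (sq_nonneg b),
    mul_nonneg (mul_nonneg hl0.le (sub_nonneg.2 hba)) (by positivity : (0:ℝ) ≤ 3 * b + 2 * a)]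

-- (ii) decreasing step from PhiU
lemma dec_of_phiU (l : ℝ) (hl0 : 0 < l) (k : ℕ) (hU : PhiU l k) (hk : 3 * l ≤ (k : ℝ) + 1) :
    Q l (k + 1) < Q l k := by
  unfold PhiU at hU
  set a := Q l k
  set b := Q l (k + 1)
  have ha : 0 < a := Q_pos l hl0 k
  have hb : 0 < b := Q_pos l hl0 (k + 1)
  by_contra hab
  push_neg at hab  -- a ≤ b
  nlinarith [mul_nonneg (sub_nonneg.2 hk) (sq_nonneg b),
    mul_nonneg (mul_nonneg hl0.le (sub_nonneg.2 hab)) (by positivity : (0:ℝ) ≤ 3 * b + 2 * a)]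

-- (iii) ratio lower bound at the top from PhiL
lemma ratio_of_phiL (l : ℝ) (hl1 : 1 ≤ l) (k : ℕ) (hL : PhiL l k) (hk : (k : ℝ) + 2 = 3 * l + 1) :
    2 * l * Q l k < (2 * l + 1) * Q l (k + 1) := by
  unfold PhiL at hL
  rw [hk] at hL
  set a := Q l k
  set b := Q l (k + 1)
  have hl0 : 0 < l := by linarith
  have ha : 0 < a := Q_pos l hl0 k
  have hb : 0 < b := Q_pos l hl0 (k + 1)
  by_contra hH
  push_neg at hH  -- (2l+1)b ≤ 2la
  have hHn : 0 ≤ 2 * l * a - (2 * l + 1) * b := by linarith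
  nlinarith [mul_nonneg hHn ha.le, mul_nonneg hHn hb.le,
    mul_nonneg (mul_nonneg hHn hb.le) hl0.le, mul_nonneg (mul_nonneg hHn ha.le) hl0.le,
    mul_pos ha hb, mul_pos hb hb, mul_pos ha ha]

section Chains

lemma incr_step (lam : ℕ) (h2 : 2 ≤ lam) (k : ℕ) (hk : k + 2 ≤ 3 * lam) :
    Q (lam : ℝ) k < Q (lam : ℝ) (k + 1) := by
  have hl2 : (2 : ℝ) ≤ (lam : ℝ) := by exact_mod_cast h2
  have hl0 : (0 : ℝ) < (lam : ℝ) := by linarith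
  match k, hk with
  | 0, _ => rw [Q_zero, Q_one]; linarith
  | 1, _ => rw [Q_one, Q_two]; nlinarith
  | (m + 2), hk =>
    apply inc_of_phiL _ hl0 _ (phi_all _ hl2 (m + 2) (by omega)).1
    have : ((m + 2 : ℕ) : ℝ) + 2 ≤ ((3 * lam : ℕ) : ℝ) := by exact_mod_cast hk
    push_cast at this ⊢
    linarith

lemma mono_up (lam : ℕ) (h2 : 2 ≤ lam) :
    ∀ k₂, k₂ ≤ 3 * lam - 1 → ∀ k₁ < k₂, Q (lam : ℝ) k₁ < Q (lam : ℝ) k₂ := by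
  intro k₂
  induction k₂ with
  | zero => intro _ k₁ hk₁; omega
  | succ m ih =>
    intro hm k₁ hk₁
    have hstep : Q (lam : ℝ) m < Q (lam : ℝ) (m + 1) := incr_step lam h2 m (by omega)
    rcases Nat.lt_succ_iff_lt_or_eq.mp hk₁ with h | h
    · exact lt_trans (ih (by omega) k₁ h) hstep
    · rw [h]; exact hstep

lemma dec_pair (lam : ℕ) (hlam : 1 ≤ lam) : ∀ j : ℕ,
    Q (lam : ℝ) (3 * lam + j) < Q (lam : ℝ) (3 * lam - 1 + j) ∧
    2 * (lam : ℝ) * Q (lam : ℝ) (3 * lam - 1 + j)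
      < (((3 * lam + j : ℕ) : ℝ) + 1 - (lam : ℝ)) * Q (lam : ℝ) (3 * lam + j) := by
  have hl1 : (1 : ℝ) ≤ (lam : ℝ) := by exact_mod_cast hlam
  have hl0 : (0 : ℝ) < (lam : ℝ) := by linarith
  obtain ⟨m, hm⟩ : ∃ m, 3 * lam = m + 1 := ⟨3 * lam - 1, by omega⟩
  have hm' : 3 * lam - 1 = m := by omega
  have hmcast : 3 * (lam : ℝ) = (m : ℝ) + 1 := by exact_mod_cast congrArg (fun t : ℕ => (t : ℝ)) hm
  intro j
  induction j with
  | zero =>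
    rcases Nat.lt_or_ge lam 2 with h1 | h2
    · -- lam = 1
      have hlam1 : lam = 1 := by omega
      subst hlam1
      have e1 : 3 * 1 + 0 = 3 := by norm_num
      have e2 : 3 * 1 - 1 + 0 = 2 := by norm_num
      rw [e1, e2, Q_two, Q_three]
      norm_num
    · -- lam ≥ 2
      have hl2 : (2 : ℝ) ≤ (lam : ℝ) := by exact_mod_cast h2
      have hm2 : 2 ≤ m := by omega
      obtain ⟨hL, hU⟩ := phi_all (lam : ℝ) hl2 m hm2
      have e1 : 3 * lam + 0 = m + 1 := by omega
      have e2 : 3 * lam - 1 + 0 = m := by omega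
      rw [e1, e2]
      have hkcast : ((m : ℕ) : ℝ) + 1 = 3 * (lam : ℝ) := by linarith
      constructor
      · exact dec_of_phiU (lam : ℝ) hl0 m hU (by linarith)
      · have h3 := ratio_of_phiL (lam : ℝ) hl1 m hL (by linarith)
        have e6 : ((m + 1 : ℕ) : ℝ) + 1 - (lam : ℝ) = 2 * (lam : ℝ) + 1 := by
          push_cast; linarith
        rw [e6]
        exact h3
  | succ j ih =>
    have e1 : 3 * lam + j = m + 1 + j := by omega
    have e2 : 3 * lam - 1 + j = m + j := by omega
    have e3 : 3 * lam + (j + 1) = m + j + 2 := by omega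
    have e4 : 3 * lam - 1 + (j + 1) = m + 1 + j := by omega
    rw [e1, e2] at ih
    obtain ⟨ih1, ih2⟩ := ih
    rw [e3, e4]
    set a := Q (lam : ℝ) (m + j) with ha'
    set b := Q (lam : ℝ) (m + 1 + j) with hb'
    set c := Q (lam : ℝ) (m + j + 2) with hc'
    have hrec0 := Q_rec (lam : ℝ) (m + j)
    have e5 : m + j + 1 = m + 1 + j := by omega
    rw [e5] at hrec0
    have ha : 0 < a := Q_pos _ hl0 _
    have hb : 0 < b := Q_pos _ hl0 _
    have hc : 0 < c := Q_pos _ hl0 _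
    push_cast at hrec0 ih2 ⊢
    -- hrec0 : ((m:ℝ) + j + 2) * c = lam * b + 2 * lam * a
    have hge : 3 * (lam : ℝ) ≤ (m : ℝ) + (j : ℝ) + 1 := by
      have : (0:ℝ) ≤ (j : ℝ) := Nat.cast_nonneg j
      linarith
    constructor
    · -- c < b
      nlinarith [hrec0, ih2, hc, hb, hl0]
    · -- 2 l b < ((m+j)+3-l) c
      have h3 : ((m : ℝ) + j + 2) * c > 3 * (lam : ℝ) * b := by
        nlinarith [hrec0, ih1, hl0, hb]
      nlinarith [h3, mul_pos hl0 hb, hge, hc, hl0, hb]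

lemma Q_lt_mode (lam : ℕ) (hlam : 1 ≤ lam) (n : ℕ) (hn : n ≠ 3 * lam - 1) :
    Q (lam : ℝ) n < Q (lam : ℝ) (3 * lam - 1) := by
  have hl1 : (1 : ℝ) ≤ (lam : ℝ) := by exact_mod_cast hlam
  have hl0 : (0 : ℝ) < (lam : ℝ) := by linarith
  rcases Nat.lt_or_ge n (3 * lam - 1) with h | h
  · rcases Nat.lt_or_ge lam 2 with h1 | h2
    · have hlam1 : lam = 1 := by omega
      subst hlam1
      have e : 3 * 1 - 1 = 2 := by norm_num
      rw [e]
      interval_cases n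
      · rw [Q_zero, Q_two]; norm_num
      · rw [Q_one, Q_two]; norm_num
    · exact mono_up lam h2 (3 * lam - 1) le_rfl n h
  · obtain ⟨j, rfl⟩ : ∃ j, n = 3 * lam + j := ⟨n - 3 * lam, by omega⟩
    clear h hn
    induction j with
    | zero => simpa using (dec_pair lam hlam 0).1
    | succ j ih =>
      have h1 := (dec_pair lam hlam (j + 1)).1
      have hidx : 3 * lam - 1 + (j + 1) = 3 * lam + j := by omega
      rw [hidx] at h1
      exact lt_trans h1 ih
end Chains


theorem poissonOrder2_mode (lam : ℕ) (hlam : 1 ≤ lam) :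
    ∀ x : ℤ, 0 ≤ x → x ≠ 3 * (lam : ℤ) - 1 →
      poissonOrderK 2 (lam : ℝ) x < poissonOrderK 2 (lam : ℝ) (3 * (lam : ℤ) - 1) := by
  intro x hx hne
  have hx' : x = ((x.toNat : ℕ) : ℤ) := (Int.toNat_of_nonneg hx).symm
  have hm : (3 * (lam : ℤ) - 1) = ((3 * lam - 1 : ℕ) : ℤ) := by omega
  rw [hx', hm, poisson_eq, poisson_eq]
  have hexp : 0 < Real.exp (-(2 * (lam : ℝ))) := Real.exp_pos _
  have hn : x.toNat ≠ 3 * lam - 1 := by omega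
  exact (mul_lt_mul_iff_right₀ hexp).mpr (Q_lt_mode lam hlam x.toNat hn)
end

section
/- For the Poisson distribution of order 6 with λ = 2, one has f_6(40;2) > f_6(39;2); in particular the mode is not 39 = 2·6·7/2 − ⌊6/2⌋, refuting the Philippou–Saghafi conjecture for k = 6, λ = 2. -/
open scoped BigOperators
open Real

/-- Integer numerator (with common denominator `40!`) of one term of `f_6(n;2)/e^{-12}`. -/
def Tterm (n a b c d e : ℕ) : ℕ :=
  if 2*a+3*b+4*c+5*d+6*e ≤ n then
    2 ^ ((n - (2*a+3*b+4*c+5*d+6*e)) + (a+b+c+d+e)) *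
      (Nat.factorial 40 / (Nat.factorial (n - (2*a+3*b+4*c+5*d+6*e)) * Nat.factorial a *
        Nat.factorial b * Nat.factorial c * Nat.factorial d * Nat.factorial e))
  else 0

/-- `T n = 40! * e^{12} * f_6(n;2)` for `n ≤ 40`. -/
def T (n : ℕ) : ℕ :=
  ∑ e ∈ Finset.range (n/6+1), ∑ d ∈ Finset.range ((n-6*e)/5+1),
    ∑ c ∈ Finset.range ((n-6*e-5*d)/4+1), ∑ b ∈ Finset.range ((n-6*e-5*d-4*c)/3+1),
      ∑ a ∈ Finset.range ((n-6*e-5*d-4*c-3*b)/2+1), Tterm n a b c d e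

/-- Index set carrying the finite support of the defining series. -/
def Sfin (n : ℕ) : Finset ((_ : ℕ) × (_ : ℕ) × (_ : ℕ) × (_ : ℕ) × ℕ) :=
  (Finset.range (n/6+1)).sigma fun e =>
    (Finset.range ((n-6*e)/5+1)).sigma fun d =>
      (Finset.range ((n-6*e-5*d)/4+1)).sigma fun c =>
        (Finset.range ((n-6*e-5*d-4*c)/3+1)).sigma fun b =>
          Finset.range ((n-6*e-5*d-4*c-3*b)/2+1)

def phi (n : ℕ) : ((_ : ℕ) × (_ : ℕ) × (_ : ℕ) × (_ : ℕ) × ℕ) → (Fin 6 → ℕ) :=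
  fun p =>
    ![n - (2*p.2.2.2.2 + 3*p.2.2.2.1 + 4*p.2.2.1 + 5*p.2.1 + 6*p.1),
      p.2.2.2.2, p.2.2.2.1, p.2.2.1, p.2.1, p.1]

@[simp] lemma phi_0 (n : ℕ) (p) :
    phi n p 0 = n - (2*p.2.2.2.2 + 3*p.2.2.2.1 + 4*p.2.2.1 + 5*p.2.1 + 6*p.1) := rfl
@[simp] lemma phi_1 (n : ℕ) (p) : phi n p 1 = p.2.2.2.2 := rfl
@[simp] lemma phi_2 (n : ℕ) (p) : phi n p 2 = p.2.2.2.1 := rfl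
@[simp] lemma phi_3 (n : ℕ) (p) : phi n p 3 = p.2.2.1 := rfl
@[simp] lemma phi_4 (n : ℕ) (p) : phi n p 4 = p.2.1 := rfl
@[simp] lemma phi_5 (n : ℕ) (p) : phi n p 5 = p.1 := rfl

lemma key_s13 (n : ℕ) (hn : n ≤ 40) :
    poissonOrderK 6 2 (n : ℤ) =
      Real.exp (-12) * ((T n : ℝ) / (Nat.factorial 40 : ℝ)) := by
  classical
  rw [poissonOrderK]
  have h1 : (∑' t : Fin 6 → ℕ,
      if ((∑ i : Fin 6, ((i : ℕ) + 1) * t i : ℕ) : ℤ) = (n : ℤ) then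
        Real.exp (-((6:ℕ) * 2)) * (2:ℝ) ^ (∑ i : Fin 6, t i) /
          ∏ i : Fin 6, (Nat.factorial (t i) : ℝ)
      else 0)
      = ∑ t ∈ (Sfin n).image (phi n),
        (if ((∑ i : Fin 6, ((i : ℕ) + 1) * t i : ℕ) : ℤ) = (n : ℤ) then
          Real.exp (-((6:ℕ) * 2)) * (2:ℝ) ^ (∑ i : Fin 6, t i) /
            ∏ i : Fin 6, (Nat.factorial (t i) : ℝ)
        else 0) := by
    apply tsum_eq_sum
    intro t ht
    rw [if_neg]
    intro hc
    apply ht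
    have hc' : ∑ i : Fin 6, ((i : ℕ) + 1) * t i = n := by exact_mod_cast hc
    rw [Fin.sum_univ_six] at hc'
    simp only [Fin.val_zero, Fin.val_one, Fin.val_two] at hc'
    refine Finset.mem_image.2 ⟨⟨t 5, t 4, t 3, t 2, t 1⟩, ?_, ?_⟩
    · simp only [Sfin, Finset.mem_sigma, Finset.mem_range]
      refine ⟨?_, ?_, ?_, ?_, ?_⟩ <;> omega
    · funext i
      fin_cases i
      · show n - (2 * t 1 + 3 * t 2 + 4 * t 3 + 5 * t 4 + 6 * t 5) = t 0
        omega
      all_goals rfl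
  rw [h1, Finset.sum_image]
  · simp only [Sfin, Finset.sum_sigma]
    have hT : (T n : ℝ) = ∑ e ∈ Finset.range (n/6+1), ∑ d ∈ Finset.range ((n-6*e)/5+1),
        ∑ c ∈ Finset.range ((n-6*e-5*d)/4+1), ∑ b ∈ Finset.range ((n-6*e-5*d-4*c)/3+1),
          ∑ a ∈ Finset.range ((n-6*e-5*d-4*c-3*b)/2+1), (Tterm n a b c d e : ℝ) := by
      rw [T]; push_cast; rfl
    rw [hT]
    simp only [Finset.mul_sum, Finset.sum_div]
    refine Finset.sum_congr rfl fun e he => Finset.sum_congr rfl fun d hd =>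
      Finset.sum_congr rfl fun c hc => Finset.sum_congr rfl fun b hb =>
      Finset.sum_congr rfl fun a ha => ?_
    simp only [Finset.mem_range] at he hd hc hb ha
    have hwn : 2*a+3*b+4*c+5*d+6*e ≤ n := by omega
    have hsum : (∑ i : Fin 6, ((i : ℕ) + 1) * phi n ⟨e,d,c,b,a⟩ i) = n := by
      rw [Fin.sum_univ_six]
      simp only [phi_0, phi_1, phi_2, phi_3, phi_4, phi_5]
      simp only [Fin.val_zero, Fin.val_one, Fin.val_two]
      omega
    rw [if_pos (by exact_mod_cast congrArg (Nat.cast : ℕ → ℤ) hsum), Tterm, if_pos hwn]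
    rw [Fin.sum_univ_six, Fin.prod_univ_six]
    simp only [phi_0, phi_1, phi_2, phi_3, phi_4, phi_5]
    set w := 2*a+3*b+4*c+5*d+6*e with hw
    set D := Nat.factorial (n - w) * Nat.factorial a * Nat.factorial b * Nat.factorial c *
      Nat.factorial d * Nat.factorial e with hDdef
    have hD : D ∣ Nat.factorial 40 := by
      have h1 := Nat.prod_factorial_dvd_factorial_sum (Finset.univ : Finset (Fin 6))
        (phi n ⟨e,d,c,b,a⟩)
      rw [Fin.prod_univ_six, Fin.sum_univ_six] at h1
      simp only [phi_0, phi_1, phi_2, phi_3, phi_4, phi_5] at h1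
      exact h1.trans (Nat.factorial_dvd_factorial (by omega))
    have hDne : D ≠ 0 := by
      apply_rules [Nat.mul_ne_zero, Nat.factorial_ne_zero]
    have hDne' : ((D : ℕ) : ℝ) ≠ 0 := Nat.cast_ne_zero.mpr hDne
    have hfne : ((Nat.factorial 40 : ℕ) : ℝ) ≠ 0 :=
      Nat.cast_ne_zero.mpr (Nat.factorial_ne_zero _)
    rw [Nat.cast_mul, Nat.cast_div hD hDne']
    have hcast : ((Nat.factorial (n-w) : ℝ) * (Nat.factorial a : ℝ) * (Nat.factorial b : ℝ) *
        (Nat.factorial c : ℝ) * (Nat.factorial d : ℝ) * (Nat.factorial e : ℝ)) = (D : ℝ) := by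
      rw [hDdef]; push_cast; ring
    rw [hcast]
    have h6 : (-(((6:ℕ):ℝ) * 2)) = (-12 : ℝ) := by norm_num
    rw [h6]
    have h2 : ((2 ^ (n - w + (a+b+c+d+e)) : ℕ) : ℝ) = (2:ℝ) ^ (n - w + (a+b+c+d+e)) := by
      push_cast; ring
    rw [h2]
    rw [show n - w + (a+b+c+d+e) = n - w + a + b + c + d + e from by ring]
    field_simp
  · intro p hp q hq h
    obtain ⟨e,d,c,b,a⟩ := p
    obtain ⟨e',d',c',b',a'⟩ := q
    have h1 : a = a' := by simpa using congrFun h 1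
    have h2 : b = b' := by simpa using congrFun h 2
    have h3 : c = c' := by simpa using congrFun h 3
    have h4 : d = d' := by simpa using congrFun h 4
    have h5 : e = e' := by simpa using congrFun h 5
    subst h1; subst h2; subst h3; subst h4; subst h5
    rfl

set_option maxHeartbeats 1000000 in
theorem tlt : T 39 < T 40 := by decide

theorem poissonOrder6_counterexample :
    poissonOrderK 6 2 39 < poissonOrderK 6 2 40 := by
  have h39 := key_s13 39 (by norm_num)
  have h40 := key_s13 40 (by norm_num)
  rw [show (((39:ℕ)):ℤ) = (39:ℤ) from rfl] at h39
  rw [show (((40:ℕ)):ℤ) = (40:ℤ) from rfl] at h40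
  rw [h39, h40]
  have hfac : (0:ℝ) < (Nat.factorial 40 : ℝ) := by positivity
  exact mul_lt_mul_of_pos_left
    ((div_lt_div_iff_of_pos_right hfac).2 (by exact_mod_cast tlt)) (Real.exp_pos _)
end

section
/- For the Poisson distribution of order k with λ = 1, P_0 = P_1 = e^{−k} and P_2 = (3/2)e^{−k}; in particular P_1 < P_2 for k ≥ 2. -/
open scoped BigOperators
open Real

lemma aux_small_zero {k : ℕ} (t : Fin k → ℕ) (n : ℕ)
    (h : ∑ i : Fin k, ((i : ℕ) + 1) * t i = n) (i : Fin k) (hi : n < (i : ℕ) + 1) :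
    t i = 0 := by
  have h1 : ((i : ℕ) + 1) * t i ≤ n := by
    rw [← h]
    exact Finset.single_le_sum (f := fun i : Fin k => ((i : ℕ) + 1) * t i)
      (fun _ _ => Nat.zero_le _) (Finset.mem_univ i)
  by_contra ht
  have h2 : (i : ℕ) + 1 ≤ ((i : ℕ) + 1) * t i :=
    Nat.le_mul_of_pos_right _ (Nat.pos_of_ne_zero ht)
  omega

lemma aux_eq0 {k : ℕ} (t : Fin k → ℕ)
    (h : ∑ i : Fin k, ((i : ℕ) + 1) * t i = 0) : t = fun _ => 0 := by
  funext i
  exact aux_small_zero t 0 h i (by omega)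

lemma aux_eq1 {k : ℕ} (hk : 2 ≤ k) (t : Fin k → ℕ)
    (h : ∑ i : Fin k, ((i : ℕ) + 1) * t i = 1) :
    t = fun j => if j = (⟨0, by omega⟩ : Fin k) then 1 else 0 := by
  set i0 : Fin k := ⟨0, by omega⟩ with hi0
  have h0 : ∀ b : Fin k, b ≠ i0 → t b = 0 := by
    intro b hb
    have hbv : (b : ℕ) ≠ 0 := fun hb0 => hb (Fin.ext hb0)
    exact aux_small_zero t 1 h b (by omega)
  funext j
  by_cases hj : j = i0
  · subst hj
    simp only [if_pos rfl]
    have := Finset.sum_eq_single (M := ℕ) (s := Finset.univ) i0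
      (f := fun i : Fin k => ((i : ℕ) + 1) * t i)
      (fun b _ hb => by show ((b:ℕ)+1)*t b = 0; rw [h0 b hb, mul_zero])
      (fun h' => absurd (Finset.mem_univ i0) h')
    rw [this] at h
    have h' : (i0 : ℕ) = 0 ∧ t i0 = 1 := by simpa using h
    exact h'.2
  · rw [h0 j hj, if_neg hj]

lemma aux_eq2 {k : ℕ} (hk : 2 ≤ k) (t : Fin k → ℕ)
    (h : ∑ i : Fin k, ((i : ℕ) + 1) * t i = 2) :
    t = (fun j => if j = (⟨0, by omega⟩ : Fin k) then 2 else 0)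
      ∨ t = fun j => if j = (⟨1, by omega⟩ : Fin k) then 1 else 0 := by
  set i0 : Fin k := ⟨0, by omega⟩ with hi0
  set i1 : Fin k := ⟨1, by omega⟩ with hi1
  have hne : i0 ≠ i1 := by
    intro hne; have := congrArg Fin.val hne; simp [hi0, hi1] at this
  have h2 : ∀ b : Fin k, b ≠ i0 → b ≠ i1 → t b = 0 := by
    intro b hb0 hb1
    have hbv0 : (b : ℕ) ≠ 0 := fun hb => hb0 (Fin.ext hb)
    have hbv1 : (b : ℕ) ≠ 1 := fun hb => hb1 (Fin.ext hb)
    exact aux_small_zero t 2 h b (by omega)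
  have hsum : t i0 + 2 * t i1 = 2 := by
    have hsub : ∑ i ∈ ({i0, i1} : Finset (Fin k)), ((i : ℕ) + 1) * t i
        = ∑ i : Fin k, ((i : ℕ) + 1) * t i := by
      apply Finset.sum_subset (Finset.subset_univ _)
      intro x _ hx
      simp only [Finset.mem_insert, Finset.mem_singleton, not_or] at hx
      rw [h2 x hx.1 hx.2, mul_zero]
    rw [Finset.sum_pair hne] at hsub
    rw [← hsub] at h
    simp only [hi0, hi1] at h ⊢
    omega
  have ht1 : t i1 = 0 ∨ t i1 = 1 := by omega
  rcases ht1 with ht1 | ht1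
  · left
    have ht0 : t i0 = 2 := by omega
    funext j
    by_cases hj0 : j = i0
    · subst hj0; simpa using ht0
    · rw [if_neg hj0]
      by_cases hj1 : j = i1
      · subst hj1; exact ht1
      · exact h2 j hj0 hj1
  · right
    have ht0 : t i0 = 0 := by omega
    funext j
    by_cases hj1 : j = i1
    · subst hj1; simpa using ht1
    · rw [if_neg hj1]
      by_cases hj0 : j = i0
      · subst hj0; exact ht0
      · exact h2 j hj0 hj1

theorem poissonOrderK_lambda_one (k : ℕ) (hk : 2 ≤ k) :
    poissonOrderK k 1 0 = Real.exp (-(k : ℝ))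
    ∧ poissonOrderK k 1 1 = Real.exp (-(k : ℝ))
    ∧ poissonOrderK k 1 2 = 3 / 2 * Real.exp (-(k : ℝ))
    ∧ poissonOrderK k 1 1 < poissonOrderK k 1 2 := by
  classical
  set i0 : Fin k := ⟨0, by omega⟩ with hi0
  set i1 : Fin k := ⟨1, by omega⟩ with hi1
  set a1 : Fin k → ℕ := fun j => if j = i0 then 1 else 0 with ha1
  set a2 : Fin k → ℕ := fun j => if j = i0 then 2 else 0 with ha2
  set b2 : Fin k → ℕ := fun j => if j = i1 then 1 else 0 with hb2
  have hne01 : i0 ≠ i1 := by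
    intro hne; have := congrArg Fin.val hne; simp [hi0, hi1] at this
  have hP0 : poissonOrderK k 1 0 = Real.exp (-(k : ℝ)) := by
    rw [poissonOrderK]
    rw [tsum_eq_single (fun _ => 0 : Fin k → ℕ)]
    · simp
    · intro t ht
      rw [if_neg]
      intro hc
      have : ∑ i : Fin k, ((i : ℕ) + 1) * t i = 0 := by exact_mod_cast hc
      exact ht (aux_eq0 t this)
  have hP1 : poissonOrderK k 1 1 = Real.exp (-(k : ℝ)) := by
    rw [poissonOrderK]
    rw [tsum_eq_single a1]
    · rw [if_pos]
      · simp [ha1, apply_ite Nat.factorial, Finset.sum_ite_eq', Finset.prod_ite_eq']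
      · simp [ha1, mul_ite, Finset.sum_ite_eq']
    · intro t ht
      rw [if_neg]
      intro hc
      have : ∑ i : Fin k, ((i : ℕ) + 1) * t i = 1 := by exact_mod_cast hc
      exact ht (aux_eq1 hk t this)
  have hP2 : poissonOrderK k 1 2 = 3 / 2 * Real.exp (-(k : ℝ)) := by
    rw [poissonOrderK]
    rw [tsum_eq_sum (s := ({a2, b2} : Finset (Fin k → ℕ)))]
    · have hab : a2 ≠ b2 := by
        intro hab
        have := congrFun hab i1
        simp [ha2, hb2, hne01, Ne.symm hne01] at this
      rw [Finset.sum_pair hab]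
      rw [if_pos, if_pos]
      · have e1 : ∏ i : Fin k, ((Nat.factorial (a2 i)) : ℝ) = 2 := by
          simp [ha2, apply_ite Nat.factorial, apply_ite (Nat.cast : ℕ → ℝ),
            Finset.prod_ite_eq']
        have e2 : ∏ i : Fin k, ((Nat.factorial (b2 i)) : ℝ) = 1 := by
          simp [hb2, apply_ite Nat.factorial, Finset.prod_ite_eq']
        rw [e1, e2]
        simp only [one_pow, mul_one, Nat.cast_ofNat]
        ring
      · simp [hb2, mul_ite, Finset.sum_ite_eq', hi1]
      · simp [ha2, mul_ite, Finset.sum_ite_eq', hi0]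
    · intro t ht
      rw [if_neg]
      intro hc
      have h2 : ∑ i : Fin k, ((i : ℕ) + 1) * t i = 2 := by exact_mod_cast hc
      rcases aux_eq2 hk t h2 with h | h
      · exact ht (by simp [h, ha2, hi0, Finset.mem_insert])
      · exact ht (by simp [h, hb2, hi1, Finset.mem_insert])
  refine ⟨hP0, hP1, hP2, ?_⟩
  rw [hP1, hP2]
  have := Real.exp_pos (-(k : ℝ))
  linarith
end

section
/- For the Poisson distribution of order 2, P_x satisfies x·P_x = λP_{x−1} + 2λP_{x−2} for x ≥ 1 (with P_{−1} = 0), and consequently Δ_5 = P_5 − P_4 = (4/15)e^{−4} when λ = 2. -/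
open scoped BigOperators
open Real

/-- A single term of the order-2 Poisson pmf. -/
noncomputable def pterm (lam : ℝ) (a b : ℕ) : ℝ :=
  Real.exp (-(2*lam)) * lam ^ (a+b) / ((Nat.factorial a : ℝ) * (Nat.factorial b))

lemma poisson2_eq_s17 (lam : ℝ) (x : ℤ) (N : ℕ) (hx : x < N) :
    poissonOrderK 2 lam x = ∑ p ∈ Finset.range N ×ˢ Finset.range N,
      if ((p.1 : ℤ) + 2 * p.2 = x) then pterm lam p.1 p.2 else 0 := by
  unfold poissonOrderK pterm
  rw [← Equiv.tsum_eq (piFinTwoEquiv fun _ => ℕ).symm]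
  rw [tsum_eq_sum (s := Finset.range N ×ˢ Finset.range N) ?_]
  · apply Finset.sum_congr rfl
    intro p _
    simp [Fin.sum_univ_two, Fin.prod_univ_two, piFinTwoEquiv]
  · intro p hp
    simp only [Fin.sum_univ_two, Fin.prod_univ_two, piFinTwoEquiv, Finset.mem_product,
      Finset.mem_range, not_and_or, not_lt] at hp ⊢
    rw [if_neg]
    intro h
    simp at h
    omega

lemma pterm_shift1 (lam : ℝ) (a b : ℕ) :
    ((a:ℝ)+1) * pterm lam (a+1) b = lam * pterm lam a b := by
  unfold pterm
  have h1 : (Nat.factorial a : ℝ) ≠ 0 := Nat.cast_ne_zero.2 a.factorial_ne_zero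
  have h2 : (Nat.factorial b : ℝ) ≠ 0 := Nat.cast_ne_zero.2 b.factorial_ne_zero
  have h3 : ((a:ℝ)+1) ≠ 0 := by positivity
  rw [Nat.factorial_succ]
  push_cast
  rw [show a + 1 + b = (a + b) + 1 by ring, pow_succ]
  field_simp

lemma pterm_shift2 (lam : ℝ) (a b : ℕ) :
    ((b:ℝ)+1) * pterm lam a (b+1) = lam * pterm lam a b := by
  unfold pterm
  have h1 : (Nat.factorial a : ℝ) ≠ 0 := Nat.cast_ne_zero.2 a.factorial_ne_zero
  have h2 : (Nat.factorial b : ℝ) ≠ 0 := Nat.cast_ne_zero.2 b.factorial_ne_zero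
  have h3 : ((b:ℝ)+1) ≠ 0 := by positivity
  rw [Nat.factorial_succ]
  push_cast
  rw [show a + (b + 1) = (a + b) + 1 by ring, pow_succ]
  field_simp

lemma poisson2_recur (lam : ℝ) (x : ℤ) (hx : 1 ≤ x) :
    (x : ℝ) * poissonOrderK 2 lam x
      = lam * poissonOrderK 2 lam (x - 1) + 2 * lam * poissonOrderK 2 lam (x - 2) := by
  obtain ⟨N, rfl⟩ : ∃ N : ℕ, x = N := ⟨x.toNat, (Int.toNat_of_nonneg (by omega)).symm⟩
  have hN : 1 ≤ N := by exact_mod_cast hx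
  rw [poisson2_eq_s17 lam _ (N+1) (by push_cast; omega),
      poisson2_eq_s17 lam _ (N+1) (by push_cast; omega),
      poisson2_eq_s17 lam _ (N+1) (by push_cast; omega)]
  have hA : ∑ p ∈ Finset.range (N+1) ×ˢ Finset.range (N+1),
        (if ((p.1:ℤ) + 2*p.2 = (N:ℤ)) then (p.1:ℝ) * pterm lam p.1 p.2 else 0)
      = lam * ∑ p ∈ Finset.range (N+1) ×ˢ Finset.range (N+1),
        (if ((p.1:ℤ) + 2*p.2 = (N:ℤ) - 1) then pterm lam p.1 p.2 else 0) := by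
    rw [Finset.mul_sum, Finset.sum_product_right, Finset.sum_product_right]
    apply Finset.sum_congr rfl
    intro b _
    rw [Finset.sum_range_succ' (fun a =>
        if ((a:ℤ) + 2*b = (N:ℤ)) then (a:ℝ) * pterm lam a b else 0) N]
    rw [Finset.sum_range_succ]
    have hz0 : (if (((0:ℕ):ℤ) + 2*b = (N:ℤ)) then ((0:ℕ):ℝ) * pterm lam 0 b else 0) = 0 := by
      split <;> simp
    have hzN : (lam * if (((N:ℕ):ℤ) + 2*b = (N:ℤ) - 1) then pterm lam N b else 0) = 0 := by
      rw [if_neg (by omega)]; ring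
    rw [hz0, hzN, add_zero, add_zero]
    apply Finset.sum_congr rfl
    intro a _
    by_cases h : (a:ℤ) + 2*b = (N:ℤ) - 1
    · rw [if_pos (by push_cast; omega), if_pos h]
      push_cast
      exact pterm_shift1 lam a b
    · rw [if_neg (by push_cast; omega), if_neg h]
      ring
  have hB : ∑ p ∈ Finset.range (N+1) ×ˢ Finset.range (N+1),
        (if ((p.1:ℤ) + 2*p.2 = (N:ℤ)) then 2 * (p.2:ℝ) * pterm lam p.1 p.2 else 0)
      = 2 * lam * ∑ p ∈ Finset.range (N+1) ×ˢ Finset.range (N+1),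
        (if ((p.1:ℤ) + 2*p.2 = (N:ℤ) - 2) then pterm lam p.1 p.2 else 0) := by
    rw [Finset.mul_sum, Finset.sum_product, Finset.sum_product]
    apply Finset.sum_congr rfl
    intro a _
    rw [Finset.sum_range_succ' (fun b =>
        if ((a:ℤ) + 2*b = (N:ℤ)) then 2 * (b:ℝ) * pterm lam a b else 0) N]
    rw [Finset.sum_range_succ]
    have hz0 : (if ((a:ℤ) + 2*((0:ℕ):ℤ) = (N:ℤ)) then 2 * ((0:ℕ):ℝ) * pterm lam a 0 else 0) = 0 := by
      split <;> simp
    have hzN : (2 * lam * if ((a:ℤ) + 2*((N:ℕ):ℤ) = (N:ℤ) - 2) then pterm lam a N else 0) = 0 := by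
      rw [if_neg (by omega)]; ring
    rw [hz0, hzN, add_zero, add_zero]
    apply Finset.sum_congr rfl
    intro b _
    by_cases h : (a:ℤ) + 2*b = (N:ℤ) - 2
    · rw [if_pos (by push_cast; omega), if_pos h]
      push_cast
      rw [show (2:ℝ) * ((b:ℝ)+1) * pterm lam a (b+1) = 2 * (((b:ℝ)+1) * pterm lam a (b+1)) by ring,
        pterm_shift2 lam a b]
      ring
    · rw [if_neg (by push_cast; omega), if_neg h]
      ring
  rw [Finset.mul_sum, ← hA, ← hB, ← Finset.sum_add_distrib]
  apply Finset.sum_congr rfl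
  intro p _
  by_cases h : (p.1:ℤ) + 2*p.2 = (N:ℤ)
  · rw [if_pos h, if_pos h, if_pos h]
    have hr : ((N:ℤ):ℝ) = (p.1:ℝ) + 2*(p.2:ℝ) := by exact_mod_cast congrArg (Int.cast : ℤ → ℝ) h.symm
    push_cast
    push_cast at hr
    rw [hr]
    ring
  · rw [if_neg h, if_neg h, if_neg h]
    ring

theorem poissonOrder2_recurrence_and_delta5 :
    (∀ lam : ℝ, 0 < lam → ∀ x : ℤ, 1 ≤ x →
      (x : ℝ) * poissonOrderK 2 lam x
        = lam * poissonOrderK 2 lam (x - 1) + 2 * lam * poissonOrderK 2 lam (x - 2))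
    ∧ poissonOrderK 2 2 5 - poissonOrderK 2 2 4 = 4 / 15 * Real.exp (-4) := by
  constructor
  · intro lam _ x hx
    exact poisson2_recur lam x hx
  · rw [poisson2_eq_s17 2 5 6 (by norm_num), poisson2_eq_s17 2 4 6 (by norm_num)]
    simp only [Finset.sum_product, Finset.sum_range_succ, Finset.sum_range_zero, pterm]
    norm_num [Nat.factorial]
    ring_nf
end
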